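/- arXiv:2103.05750 — 5 statements merged into one kernel-verified Lean document; each statement's English description precedes it below -/
import Mathlib

section
/- Simplified projection step: let θ̂ ∈ ℝ^d and β > 0, and let Ṽ_t^{1/2} denote the positive-definite square root of Ṽ_t. Suppose the pair (θ̃, η̃) minimizes the function (θ', η) ↦ ‖g_t(θ') + β Ṽ_t^{1/2} η − g_t(θ̂)‖_{V_t^{-2}} over the set {(θ', η) ∈ ℝ^d × ℝ^d : ‖θ'‖₂ ≤ S and ‖η‖₂ ≤ 1}. Then there exists θ^p minimizing θ ↦ ‖g_t(θ) − g_t(θ̂)‖_{V_t^{-2}} over {θ ∈ ℝ^d : Θ ∩ E_β(θ) ≠ ∅} such that θ̃ ∈ Θ ∩ E_β(θ^p). -/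
open Finset Matrix

noncomputable section

/-- Euclidean norm of a vector in `ℝ^d`. -/
def vecEnorm {d : ℕ} (v : Fin d → ℝ) : ℝ := Real.sqrt (v ⬝ᵥ v)

/-- Norm ‖v‖_M = √(vᵀ M v) associated with a (positive definite) matrix M. -/
def mnorm {d : ℕ} (M : Matrix (Fin d) (Fin d) ℝ) (v : Fin d → ℝ) : ℝ :=
  Real.sqrt (v ⬝ᵥ M.mulVec v)

/-- The quasi-likelihood map g_t(θ) = Σ_{s=1}^{t-1} γ^{t-1-s} μ(⟨x_s,θ⟩) x_s + λ c_μ θ. -/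
def gmap {d : ℕ} (t : ℕ) (γ lam cmu : ℝ) (μ : ℝ → ℝ) (x : ℕ → Fin d → ℝ)
    (θ : Fin d → ℝ) : Fin d → ℝ :=
  (∑ s ∈ Finset.Icc 1 (t - 1), (γ ^ (t - 1 - s) * μ (x s ⬝ᵥ θ)) • x s) + (lam * cmu) • θ

/-- Weighted design matrix V_t = Σ_{s=1}^{t-1} γ^{t-1-s} x_s x_sᵀ + λ I_d. -/
def designV {d : ℕ} (t : ℕ) (γ lam : ℝ) (x : ℕ → Fin d → ℝ) : Matrix (Fin d) (Fin d) ℝ :=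
  (∑ s ∈ Finset.Icc 1 (t - 1), (γ ^ (t - 1 - s)) • vecMulVec (x s) (x s))
    + lam • (1 : Matrix (Fin d) (Fin d) ℝ)

/-- Weighted design matrix Ṽ_t = Σ_{s=1}^{t-1} γ^{2(t-1-s)} x_s x_sᵀ + λ I_d. -/
def designVtilde {d : ℕ} (t : ℕ) (γ lam : ℝ) (x : ℕ → Fin d → ℝ) : Matrix (Fin d) (Fin d) ℝ :=
  (∑ s ∈ Finset.Icc 1 (t - 1), (γ ^ (2 * (t - 1 - s))) • vecMulVec (x s) (x s))
    + lam • (1 : Matrix (Fin d) (Fin d) ℝ)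

section helpers
open Filter


def dotCLM {d : ℕ} (w : Fin d → ℝ) : (Fin d → ℝ) →L[ℝ] ℝ :=
  ∑ i, w i • ContinuousLinearMap.proj i

lemma dotCLM_apply {d : ℕ} (w v : Fin d → ℝ) : dotCLM w v = w ⬝ᵥ v := by
  simp [dotCLM, dotProduct]

def primMu (μ : ℝ → ℝ) (z : ℝ) : ℝ := ∫ u in (0:ℝ)..z, μ u

lemma hasDerivAt_primMu {μ : ℝ → ℝ} (hμ : Continuous μ) (z : ℝ) :
    HasDerivAt (primMu μ) (μ z) z :=
  intervalIntegral.integral_hasDerivAt_right (hμ.intervalIntegrable _ _)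
    (hμ.stronglyMeasurableAtFilter _ _) hμ.continuousAt

lemma primMu_ge {μ : ℝ → ℝ} (hμ : Continuous μ) (hm : Monotone μ) (z : ℝ) :
    μ 0 * z ≤ primMu μ z := by
  rcases le_or_gt 0 z with hz | hz
  · have : ∫ u in (0:ℝ)..z, μ 0 ≤ ∫ u in (0:ℝ)..z, μ u := by
      apply intervalIntegral.integral_mono_on hz (intervalIntegrable_const)
        (hμ.intervalIntegrable _ _)
      intro u hu; exact hm hu.1
    simpa [mul_comm, primMu] using this
  · have h1 : ∫ u in z..(0:ℝ), μ u ≤ ∫ u in z..(0:ℝ), μ 0 := by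
      apply intervalIntegral.integral_mono_on hz.le (hμ.intervalIntegrable _ _)
        intervalIntegrable_const
      intro u hu; exact hm hu.2
    have h2 : primMu μ z = -∫ u in z..(0:ℝ), μ u := by
      rw [primMu, intervalIntegral.integral_symm]
    rw [h2]
    simp only [intervalIntegral.integral_const, smul_eq_mul, sub_zero] at h1
    nlinarith

lemma sum_dotProduct' {d : ℕ} {α : Type*} (S : Finset α) (f : α → Fin d → ℝ) (v : Fin d → ℝ) :
    (∑ s ∈ S, f s) ⬝ᵥ v = ∑ s ∈ S, f s ⬝ᵥ v := by
  simp only [dotProduct, Finset.sum_apply, Finset.sum_mul]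
  rw [Finset.sum_comm]

lemma enorm_aux {d : ℕ} (θ : Fin d → ℝ) (i : Fin d) : |θ i| ≤ Real.sqrt (θ ⬝ᵥ θ) := by
  rw [← Real.sqrt_sq_eq_abs]
  apply Real.sqrt_le_sqrt
  have : θ ⬝ᵥ θ = ∑ j, (θ j)^2 := by simp [dotProduct, sq]
  rw [this]
  exact Finset.single_le_sum (fun j _ => sq_nonneg (θ j)) (Finset.mem_univ i)

lemma gmap_surj {d : ℕ} (t : ℕ) (γ lam cmu : ℝ) (μ : ℝ → ℝ) (x : ℕ → Fin d → ℝ)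
    (hγ : 0 ≤ γ) (hpos : 0 < lam * cmu) (hμc : Continuous μ) (hμm : Monotone μ) :
    Function.Surjective (gmap t γ lam cmu μ x) := by
  intro y
  set c : ℝ := lam * cmu with hc
  set F : (Fin d → ℝ) → ℝ := fun θ =>
    (∑ s ∈ Finset.Icc 1 (t - 1), γ ^ (t - 1 - s) * primMu μ (x s ⬝ᵥ θ))
      + c / 2 * (θ ⬝ᵥ θ) - y ⬝ᵥ θ with hF
  -- derivative of F
  have hdot : ∀ (w θ : Fin d → ℝ), HasFDerivAt (fun θ : Fin d → ℝ => w ⬝ᵥ θ) (dotCLM w) θ := by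
    intro w θ
    have : (fun θ : Fin d → ℝ => w ⬝ᵥ θ) = fun θ => dotCLM w θ := by
      funext v; rw [dotCLM_apply]
    rw [this]
    exact (dotCLM w).hasFDerivAt
  have hquad : ∀ θ : Fin d → ℝ, HasFDerivAt (fun θ : Fin d → ℝ => θ ⬝ᵥ θ)
      (dotCLM ((2:ℝ) • θ)) θ := by
    intro θ
    have h1 : ∀ i : Fin d, HasFDerivAt (fun θ : Fin d → ℝ => θ i * θ i)
        (θ i • (ContinuousLinearMap.proj i : (Fin d → ℝ) →L[ℝ] ℝ)
          + θ i • (ContinuousLinearMap.proj i : (Fin d → ℝ) →L[ℝ] ℝ)) θ := by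
      intro i
      have hp : HasFDerivAt (fun θ : Fin d → ℝ => θ i)
          (ContinuousLinearMap.proj i : (Fin d → ℝ) →L[ℝ] ℝ) θ :=
        (ContinuousLinearMap.proj i : (Fin d → ℝ) →L[ℝ] ℝ).hasFDerivAt
      exact hp.mul hp
    have h2 : HasFDerivAt (fun θ : Fin d → ℝ => ∑ i, θ i * θ i)
        (∑ i, (θ i • (ContinuousLinearMap.proj i : (Fin d → ℝ) →L[ℝ] ℝ)
          + θ i • ContinuousLinearMap.proj i)) θ := HasFDerivAt.fun_sum (fun i _ => h1 i)
    have he : (fun θ : Fin d → ℝ => θ ⬝ᵥ θ) = fun θ : Fin d → ℝ => ∑ i, θ i * θ i := by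
      funext v; simp [dotProduct]
    rw [he]
    refine HasFDerivAt.congr_fderiv h2 ?_
    rw [dotCLM]
    refine Finset.sum_congr rfl fun i _ => ?_
    rw [Pi.smul_apply, smul_eq_mul, two_mul, add_smul]
  have hFderiv : ∀ θ, HasFDerivAt F (dotCLM (gmap t γ lam cmu μ x θ - y)) θ := by
    intro θ
    have hterm : ∀ s : ℕ, HasFDerivAt (fun θ : Fin d → ℝ => γ ^ (t-1-s) * primMu μ (x s ⬝ᵥ θ))
        ((γ ^ (t-1-s)) • (μ (x s ⬝ᵥ θ) • dotCLM (x s))) θ := by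
      intro s
      exact (((hasDerivAt_primMu hμc (x s ⬝ᵥ θ)).comp_hasFDerivAt θ (hdot (x s) θ))).const_mul _
    have hsum : HasFDerivAt (fun θ : Fin d → ℝ =>
        ∑ s ∈ Finset.Icc 1 (t-1), γ ^ (t-1-s) * primMu μ (x s ⬝ᵥ θ))
        (∑ s ∈ Finset.Icc 1 (t-1), (γ ^ (t-1-s)) • (μ (x s ⬝ᵥ θ) • dotCLM (x s))) θ :=
      HasFDerivAt.fun_sum (fun s _ => hterm s)
    have htot := ((hsum.add ((hquad θ).const_mul (c/2))).sub (hdot y θ))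
    refine HasFDerivAt.congr_fderiv htot ?_
    apply ContinuousLinearMap.ext
    intro v
    simp only [dotCLM_apply, ContinuousLinearMap.add_apply, ContinuousLinearMap.sub_apply,
      ContinuousLinearMap.smul_apply, ContinuousLinearMap.sum_apply, smul_eq_mul,
      dotCLM_apply, gmap, sub_dotProduct, add_dotProduct, sum_dotProduct',
      smul_dotProduct]
    ring_nf
    rw [hc]; ring
  have hFcont : Continuous F := by
    rw [continuous_iff_continuousAt]
    exact fun θ => (hFderiv θ).continuousAt
  -- coercivity
  set C : ℝ := (∑ s ∈ Finset.Icc 1 (t-1), γ ^ (t-1-s) * |μ 0| * (∑ i, |x s i|))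
      + ∑ i, |y i| with hC
  have hbound : ∀ θ : Fin d → ℝ,
      c / 2 * Real.sqrt (θ ⬝ᵥ θ) ^ 2 - C * Real.sqrt (θ ⬝ᵥ θ) ≤ F θ := by
    intro θ
    set e := Real.sqrt (θ ⬝ᵥ θ) with he
    have he0 : 0 ≤ e := Real.sqrt_nonneg _
    have hee : e ^ 2 = θ ⬝ᵥ θ := Real.sq_sqrt (by
      simpa [dotProduct, sq] using Finset.sum_nonneg (fun j _ => mul_self_nonneg (θ j)))
    have hdotle : ∀ w : Fin d → ℝ, |w ⬝ᵥ θ| ≤ (∑ i, |w i|) * e := by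
      intro w
      calc |w ⬝ᵥ θ| ≤ ∑ i, |w i * θ i| := Finset.abs_sum_le_sum_abs _ _
        _ ≤ ∑ i, |w i| * e := by
            apply Finset.sum_le_sum
            intro i _
            rw [abs_mul]
            exact mul_le_mul_of_nonneg_left (enorm_aux θ i) (abs_nonneg _)
        _ = (∑ i, |w i|) * e := by rw [Finset.sum_mul]
    have h1 : ∀ s ∈ Finset.Icc 1 (t-1),
        -(γ ^ (t-1-s) * |μ 0| * (∑ i, |x s i|) * e) ≤ γ ^ (t-1-s) * primMu μ (x s ⬝ᵥ θ) := by
      intro s _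
      have hg : (0:ℝ) ≤ γ ^ (t-1-s) := pow_nonneg hγ _
      have h2 := primMu_ge hμc hμm (x s ⬝ᵥ θ)
      have h3 : -( |μ 0| * ((∑ i, |x s i|) * e)) ≤ μ 0 * (x s ⬝ᵥ θ) := by
        have := hdotle (x s)
        have h4 : |μ 0 * (x s ⬝ᵥ θ)| ≤ |μ 0| * ((∑ i, |x s i|) * e) := by
          rw [abs_mul]
          exact mul_le_mul_of_nonneg_left this (abs_nonneg _)
        linarith [neg_abs_le (μ 0 * (x s ⬝ᵥ θ))]
      have := le_trans h3 h2
      calc -(γ ^ (t-1-s) * |μ 0| * (∑ i, |x s i|) * e)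
          = γ ^ (t-1-s) * (-( |μ 0| * ((∑ i, |x s i|) * e))) := by ring
        _ ≤ γ ^ (t-1-s) * primMu μ (x s ⬝ᵥ θ) := mul_le_mul_of_nonneg_left this hg
    have hsum1 : -((∑ s ∈ Finset.Icc 1 (t-1), γ ^ (t-1-s) * |μ 0| * (∑ i, |x s i|)) * e)
        ≤ ∑ s ∈ Finset.Icc 1 (t-1), γ ^ (t-1-s) * primMu μ (x s ⬝ᵥ θ) := by
      rw [Finset.sum_mul, ← Finset.sum_neg_distrib]
      exact Finset.sum_le_sum h1
    have hy1 : -((∑ i, |y i|) * e) ≤ -(y ⬝ᵥ θ) := by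
      have := hdotle y
      linarith [le_abs_self (y ⬝ᵥ θ)]
    simp only [hF, hC]
    nlinarith [hsum1, hy1, hee]
  have hcoer : Tendsto F (cocompact (Fin d → ℝ)) atTop := by
    have hsq : Tendsto (fun θ : Fin d → ℝ => Real.sqrt (θ ⬝ᵥ θ)) (cocompact _) atTop := by
      apply tendsto_atTop_mono _ tendsto_norm_cocompact_atTop
      intro θ
      rcases isEmpty_or_nonempty (Fin d) with h | h
      · have hθ : θ = 0 := funext fun i => (h.false i).elim
        subst hθ
        simp [Real.sqrt_nonneg]
      · rw [pi_norm_le_iff_of_nonneg (Real.sqrt_nonneg _)]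
        intro i
        simpa using enorm_aux θ i
    have hq : Tendsto (fun e : ℝ => c / 2 * e ^ 2 - C * e) atTop atTop := by
      have h1 : Tendsto (fun e : ℝ => e * (c / 2 * e - C)) atTop atTop := by
        apply Tendsto.atTop_mul_atTop₀ tendsto_id
        apply tendsto_atTop_add_const_right
        exact (tendsto_const_mul_atTop_of_pos (by positivity)).mpr tendsto_id
      convert h1 using 2 with e
      ring
    exact tendsto_atTop_mono hbound (hq.comp hsq)
  obtain ⟨θ₀, hθ₀⟩ := hFcont.exists_forall_le hcoer
  have hloc : IsLocalMin F θ₀ := Filter.Eventually.of_forall hθ₀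
  have hzero := hloc.hasFDerivAt_eq_zero (hFderiv θ₀)
  refine ⟨θ₀, ?_⟩
  funext i
  have := congrArg (fun L : (Fin d → ℝ) →L[ℝ] ℝ => L (Pi.single i 1)) hzero
  simp only [dotCLM_apply, ContinuousLinearMap.zero_apply] at this
  rw [dotProduct_single, mul_one] at this
  have h5 : gmap t γ lam cmu μ x θ₀ i - y i = 0 := this
  linarith

lemma vecEnorm_smul {d : ℕ} (a : ℝ) (v : Fin d → ℝ) : vecEnorm (a • v) = |a| * vecEnorm v := by
  rw [vecEnorm, vecEnorm, smul_dotProduct, dotProduct_smul, smul_eq_mul, smul_eq_mul, ← mul_assoc,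
    ← sq]
  rw [Real.sqrt_mul (sq_nonneg a), Real.sqrt_sq_eq_abs]

lemma vecEnorm_neg {d : ℕ} (v : Fin d → ℝ) : vecEnorm (-v) = vecEnorm v := by
  have : (-v : Fin d → ℝ) = (-1 : ℝ) • v := by funext i; simp
  rw [this, vecEnorm_smul]; simp


end helpers

/-- Simplified projection step (Proposition 1). -/
theorem stmt_1 {d t : ℕ} (hd : 1 ≤ d) (ht : 2 ≤ t)
    (L S lam γ : ℝ) (hL : 0 < L) (hS : 0 < S) (hlam : 0 < lam)
    (hγ : γ ∈ Set.Ioo (0 : ℝ) 1)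
    (x : ℕ → Fin d → ℝ) (hx : ∀ s ∈ Finset.Icc 1 (t - 1), vecEnorm (x s) ≤ L)
    (μ : ℝ → ℝ) (hμc : ContDiff ℝ 1 μ) (hμm : StrictMono μ)
    (kmu cmu : ℝ)
    (hkmu : kmu = sSup (deriv μ '' Set.Icc (-(L * S)) (L * S)))
    (hcmu : cmu = sInf (deriv μ '' Set.Icc (-(L * S)) (L * S)))
    (hcmupos : 0 < cmu)
    (β : ℝ) (hβ : 0 < β) (θhat : Fin d → ℝ)
    (W : Matrix (Fin d) (Fin d) ℝ) (hW : W.PosDef)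
    (hWsq : W * W = designVtilde t γ lam x)
    (θtilde ηtilde : Fin d → ℝ)
    (hmemθ : vecEnorm θtilde ≤ S) (hmemη : vecEnorm ηtilde ≤ 1)
    (hmin : ∀ θ' η : Fin d → ℝ, vecEnorm θ' ≤ S → vecEnorm η ≤ 1 →
      mnorm (designV t γ lam x * designV t γ lam x)⁻¹
          (gmap t γ lam cmu μ x θtilde + β • W.mulVec ηtilde - gmap t γ lam cmu μ x θhat)
        ≤ mnorm (designV t γ lam x * designV t γ lam x)⁻¹
            (gmap t γ lam cmu μ x θ' + β • W.mulVec η - gmap t γ lam cmu μ x θhat)) :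
    ∃ θp : Fin d → ℝ,
      -- θp is feasible for the projection program (P1)
      (∃ θ' : Fin d → ℝ, vecEnorm θ' ≤ S ∧
        mnorm (designVtilde t γ lam x)⁻¹
          (gmap t γ lam cmu μ x θ' - gmap t γ lam cmu μ x θp) ≤ β)
      -- θp minimizes θ ↦ ‖g_t(θ) - g_t(θ̂)‖_{V_t^{-2}} over the feasible set
      ∧ (∀ θ : Fin d → ℝ,
          (∃ θ' : Fin d → ℝ, vecEnorm θ' ≤ S ∧
            mnorm (designVtilde t γ lam x)⁻¹
              (gmap t γ lam cmu μ x θ' - gmap t γ lam cmu μ x θ) ≤ β) →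
          mnorm (designV t γ lam x * designV t γ lam x)⁻¹
              (gmap t γ lam cmu μ x θp - gmap t γ lam cmu μ x θhat)
            ≤ mnorm (designV t γ lam x * designV t γ lam x)⁻¹
                (gmap t γ lam cmu μ x θ - gmap t γ lam cmu μ x θhat))
      -- and θ̃ ∈ Θ ∩ E_β(θp)
      ∧ vecEnorm θtilde ≤ S
      ∧ mnorm (designVtilde t γ lam x)⁻¹
          (gmap t γ lam cmu μ x θtilde - gmap t γ lam cmu μ x θp) ≤ β := by
  set g := gmap t γ lam cmu μ x with hg
  have hWdet : IsUnit W.det := hW.det_pos.ne'.isUnit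
  have hWinvW : W⁻¹ * W = 1 := Matrix.nonsing_inv_mul W hWdet
  have hWWinv : W * W⁻¹ = 1 := Matrix.mul_nonsing_inv W hWdet
  have hWsymm : Wᵀ = W := by
    have := hW.1
    rwa [Matrix.IsHermitian, Matrix.conjTranspose_eq_transpose_of_trivial] at this
  have hWinvsymm : (W⁻¹)ᵀ = W⁻¹ := by rw [Matrix.transpose_nonsing_inv, hWsymm]
  -- mnorm in Ṽ⁻¹ is the euclidean norm after applying W⁻¹
  have hkey : ∀ v : Fin d → ℝ,
      mnorm (designVtilde t γ lam x)⁻¹ v = vecEnorm (W⁻¹ *ᵥ v) := by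
    intro v
    rw [mnorm, vecEnorm, ← hWsq, Matrix.mul_inv_rev, ← Matrix.mulVec_mulVec,
      Matrix.dotProduct_mulVec]
    congr 1
    rw [← hWinvsymm, Matrix.vecMul_transpose, hWinvsymm]
  -- W⁻¹ undoes W
  have hWinv_mulVec : ∀ v : Fin d → ℝ, W⁻¹ *ᵥ (W *ᵥ v) = v := by
    intro v; rw [Matrix.mulVec_mulVec, hWinvW, Matrix.one_mulVec]
  have hW_mulVec : ∀ v : Fin d → ℝ, W *ᵥ (W⁻¹ *ᵥ v) = v := by
    intro v; rw [Matrix.mulVec_mulVec, hWWinv, Matrix.one_mulVec]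
  -- surjectivity gives θp
  obtain ⟨θp, hθp⟩ := gmap_surj t γ lam cmu μ x hγ.1.le (mul_pos hlam hcmupos)
    (hμc.continuous) hμm.monotone (g θtilde + β • W *ᵥ ηtilde)
  rw [show gmap t γ lam cmu μ x = g from hg.symm] at hθp
  have hEtilde : mnorm (designVtilde t γ lam x)⁻¹ (g θtilde - g θp) ≤ β := by
    rw [hkey]
    have h1 : g θtilde - g θp = -(β • W *ᵥ ηtilde) := by rw [hθp]; abel
    rw [h1, Matrix.mulVec_neg, Matrix.mulVec_smul, hWinv_mulVec, vecEnorm_neg, vecEnorm_smul,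
      abs_of_pos hβ]
    calc β * vecEnorm ηtilde ≤ β * 1 := by
          exact mul_le_mul_of_nonneg_left hmemη hβ.le
      _ = β := mul_one β
  refine ⟨θp, ⟨θtilde, hmemθ, hEtilde⟩, ?_, hmemθ, hEtilde⟩
  rintro θ ⟨θ', hθ'S, hθ'β⟩
  set u := g θ - g θ' with hu
  set η := β⁻¹ • (W⁻¹ *ᵥ u) with hη
  have hηle : vecEnorm η ≤ 1 := by
    rw [hη, vecEnorm_smul, abs_of_pos (inv_pos.mpr hβ)]
    rw [hkey] at hθ'β
    have h2 : W⁻¹ *ᵥ (g θ' - g θ) = -(W⁻¹ *ᵥ u) := by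
      rw [hu, ← Matrix.mulVec_neg]; congr 1; abel
    rw [h2, vecEnorm_neg] at hθ'β
    calc β⁻¹ * vecEnorm (W⁻¹ *ᵥ u) ≤ β⁻¹ * β :=
          mul_le_mul_of_nonneg_left hθ'β (inv_pos.mpr hβ).le
      _ = 1 := inv_mul_cancel₀ hβ.ne'
  have hrepr : g θ' + β • W *ᵥ η = g θ := by
    rw [hη, Matrix.mulVec_smul, hW_mulVec, smul_smul, mul_inv_cancel₀ hβ.ne', one_smul, hu]
    abel
  have := hmin θ' η hθ'S hηle
  rwa [← hθp, hrepr] at this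
end
end

section
/- Tracking lemma with orthogonal action sets: assume every x_s is a scalar multiple of a vector of a fixed orthonormal basis (e_1,…,e_d) of ℝ^d. Let θ*_1, …, θ*_t ∈ Θ and let θ̄ ∈ ℝ^d satisfy g_t(θ̄) = Σ_{s=1}^{t-1} γ^{t-1-s} μ(⟨x_s, θ*_s⟩) x_s + λ c_μ θ*_t. Then for every integer D with 1 ≤ D ≤ t−1, ‖g_t(θ̄) − g_t(θ*_t)‖_{V_t^{-2}} ≤ (2 k_μ L² S / λ) · γ^D/(1 − γ) + k_μ Σ_{s=t−D}^{t−1} ‖θ*_s − θ*_{s+1}‖₂. -/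
open Finset Matrix

noncomputable section

/-- Euclidean norm of a vector in `ℝ^d`. -/
def euclNorm {d : ℕ} (v : Fin d → ℝ) : ℝ := Real.sqrt (v ⬝ᵥ v)

namespace Helpers

variable {d : ℕ}

lemma enorm_nonneg (v : Fin d → ℝ) : 0 ≤ euclNorm v := Real.sqrt_nonneg _

lemma enorm_eq_norm (v : Fin d → ℝ) :
    euclNorm v = ‖(WithLp.equiv 2 (Fin d → ℝ)).symm v‖ := by
  rw [EuclideanSpace.norm_eq]
  unfold euclNorm
  congr 1
  refine Finset.sum_congr rfl fun i _ => ?_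
  simp [Real.norm_eq_abs, sq_abs, sq]

lemma enorm_add_le (u v : Fin d → ℝ) : euclNorm (u + v) ≤ euclNorm u + euclNorm v := by
  simp only [enorm_eq_norm]
  exact norm_add_le ((WithLp.equiv 2 (Fin d → ℝ)).symm u) ((WithLp.equiv 2 (Fin d → ℝ)).symm v)

lemma enorm_zero : euclNorm (0 : Fin d → ℝ) = 0 := by
  simp [euclNorm, dotProduct]

lemma enorm_sum_le {α : Type*} (s : Finset α) (f : α → Fin d → ℝ) :
    euclNorm (∑ a ∈ s, f a) ≤ ∑ a ∈ s, euclNorm (f a) := by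
  classical
  induction s using Finset.cons_induction with
  | empty => simp [enorm_zero]
  | cons a s ha ih =>
      rw [Finset.sum_cons, Finset.sum_cons]
      exact (enorm_add_le _ _).trans (add_le_add_right ih _)

lemma enorm_mono {u b : Fin d → ℝ} (h : ∀ i, |u i| ≤ b i) : euclNorm u ≤ euclNorm b := by
  apply Real.sqrt_le_sqrt
  refine Finset.sum_le_sum fun i _ => ?_
  calc u i * u i = |u i| * |u i| := (abs_mul_abs_self _).symm
    _ ≤ b i * b i := mul_self_le_mul_self (abs_nonneg _) (h i)

lemma enorm_le_sum {b : Fin d → ℝ} (h : ∀ i, 0 ≤ b i) : euclNorm b ≤ ∑ i, b i := by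
  have h2 : b ⬝ᵥ b ≤ (∑ i, b i) ^ 2 := by
    rw [sq, Finset.sum_mul]
    show (∑ i, b i * b i) ≤ _
    refine Finset.sum_le_sum fun i _ => ?_
    exact mul_le_mul_of_nonneg_left (Finset.single_le_sum (fun j _ => h j) (Finset.mem_univ i)) (h i)
  calc euclNorm b ≤ Real.sqrt ((∑ i, b i) ^ 2) := Real.sqrt_le_sqrt h2
    _ = ∑ i, b i := Real.sqrt_sq (Finset.sum_nonneg fun i _ => h i)

lemma enorm_abs (z : Fin d → ℝ) : euclNorm (fun i => |z i|) = euclNorm z := by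
  unfold euclNorm dotProduct
  simp [abs_mul_abs_self]

lemma enorm_smul_nonneg {c : ℝ} (hc : 0 ≤ c) (z : Fin d → ℝ) :
    euclNorm (fun i => c * z i) = c * euclNorm z := by
  unfold euclNorm dotProduct
  have h : ∑ i, (c * z i) * (c * z i) = c ^ 2 * ∑ i, z i * z i := by
    rw [Finset.mul_sum]; exact Finset.sum_congr rfl fun i _ => by ring
  rw [h, Real.sqrt_mul (sq_nonneg c), Real.sqrt_sq hc]

lemma telescope {α : Type*} [AddCommGroup α] (f : ℕ → α) :
    ∀ n m, m ≤ n → f m - f n = ∑ r ∈ Finset.Ico m n, (f r - f (r + 1)) := by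
  intro n
  induction n with
  | zero => intro m hm; interval_cases m; simp
  | succ n ih =>
      intro m hm
      rcases eq_or_lt_of_le hm with h | h
      · simp [h]
      · have hmn : m ≤ n := Nat.lt_succ_iff.mp h
        rw [Finset.sum_Ico_succ_top hmn, ← ih m hmn]
        abel

lemma geom_bound {γ : ℝ} (h0 : 0 < γ) (h1 : γ < 1) (m K : ℕ) (hmK : m ≤ K) :
    ∑ s ∈ Finset.Icc 1 m, γ ^ (K - s) ≤ γ ^ (K - m) / (1 - γ) := by
  have h1' : (0 : ℝ) < 1 - γ := by linarith
  have step1 : ∑ s ∈ Finset.Icc 1 m, γ ^ (K - s)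
      = γ ^ (K - m) * ∑ s ∈ Finset.Icc 1 m, γ ^ (m - s) := by
    rw [Finset.mul_sum]
    refine Finset.sum_congr rfl fun s hs => ?_
    rw [← pow_add]
    congr 1
    have := Finset.mem_Icc.mp hs
    omega
  have step2 : ∑ s ∈ Finset.Icc 1 m, γ ^ (m - s) = ∑ j ∈ Finset.range m, γ ^ j := by
    refine Finset.sum_nbij' (i := fun s => m - s) (j := fun j => m - j) ?_ ?_ ?_ ?_ ?_
    · intro s hs; have := Finset.mem_Icc.mp hs; simp only [Finset.mem_range]; omega
    · intro j hj; have := Finset.mem_range.mp hj; simp only [Finset.mem_Icc]; omega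
    · intro s hs; have := Finset.mem_Icc.mp hs; show m - (m - s) = s; omega
    · intro j hj; have := Finset.mem_range.mp hj; show m - (m - j) = j; omega
    · intro s hs; rfl
  have step3 : ∑ j ∈ Finset.range m, γ ^ j ≤ 1 / (1 - γ) := by
    rw [geom_sum_eq (ne_of_lt h1)]
    have hne : γ - 1 ≠ 0 := by linarith
    have hne2 : (1 : ℝ) - γ ≠ 0 := by linarith
    have heq : (γ ^ m - 1) / (γ - 1) = (1 - γ ^ m) / (1 - γ) := by
      field_simp
      ring
    rw [heq]
    have hle : 1 - γ ^ m ≤ 1 := by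
      have : 0 ≤ γ ^ m := pow_nonneg h0.le m
      linarith
    exact (div_le_div_iff_of_pos_right h1').mpr hle
  rw [step1, step2]
  calc γ ^ (K - m) * ∑ j ∈ Finset.range m, γ ^ j
      ≤ γ ^ (K - m) * (1 / (1 - γ)) :=
        mul_le_mul_of_nonneg_left step3 (pow_nonneg h0.le _)
    _ = γ ^ (K - m) / (1 - γ) := by ring

lemma deriv_nonneg_of_strictMono {f : ℝ → ℝ} (hf : StrictMono f) {z : ℝ}
    (hd : DifferentiableAt ℝ f z) : 0 ≤ deriv f z := by
  have h : Filter.Tendsto (slope f z) (nhdsWithin z (Set.Ioi z)) (nhds (deriv f z)) := by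
    refine (hasDerivAt_iff_tendsto_slope.mp hd.hasDerivAt).mono_left ?_
    refine nhdsWithin_mono z ?_
    intro y hy
    exact ne_of_gt hy
  refine ge_of_tendsto h ?_
  filter_upwards [self_mem_nhdsWithin] with y hy
  rw [slope_def_field]
  have h1 : f z ≤ f y := (hf.le_iff_le).mpr (le_of_lt hy)
  have h2 : z < y := hy
  exact div_nonneg (by linarith) (by linarith)

lemma lip {μ : ℝ → ℝ} (hμc : ContDiff ℝ 1 μ) (hμm : StrictMono μ) {R : ℝ} (hR : 0 ≤ R)
    {p q : ℝ} (hp : |p| ≤ R) (hq : |q| ≤ R) :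
    |μ p - μ q| ≤ sSup (deriv μ '' Set.Icc (-R) R) * |p - q| := by
  set K := sSup (deriv μ '' Set.Icc (-R) R) with hK
  have hdiff : Differentiable ℝ μ := hμc.differentiable one_ne_zero
  have hcont : Continuous (deriv μ) := hμc.continuous_deriv le_rfl
  have himg : IsCompact (deriv μ '' Set.Icc (-R) R) := isCompact_Icc.image hcont
  have hbdd : BddAbove (deriv μ '' Set.Icc (-R) R) := himg.bddAbove
  have hbound : ∀ z ∈ Set.Icc (-R) R, ‖deriv μ z‖ ≤ K := by
    intro z hz
    rw [Real.norm_eq_abs, abs_of_nonneg (deriv_nonneg_of_strictMono hμm (hdiff z))]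
    exact le_csSup hbdd ⟨z, hz, rfl⟩
  have hpm : p ∈ Set.Icc (-R) R := by
    rcases abs_le.mp hp with ⟨h1, h2⟩; exact ⟨h1, h2⟩
  have hqm : q ∈ Set.Icc (-R) R := by
    rcases abs_le.mp hq with ⟨h1, h2⟩; exact ⟨h1, h2⟩
  have := (convex_Icc (-R) R).norm_image_sub_le_of_norm_deriv_le
    (fun z _ => hdiff z) hbound hqm hpm
  simpa [Real.norm_eq_abs] using this

lemma dotProduct_finsum {α : Type*} (v : Fin d → ℝ) (s : Finset α) (f : α → Fin d → ℝ) :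
    v ⬝ᵥ (∑ a ∈ s, f a) = ∑ a ∈ s, v ⬝ᵥ f a := by
  unfold dotProduct
  simp only [Finset.sum_apply, Finset.mul_sum]
  exact Finset.sum_comm

lemma finsum_dotProduct {α : Type*} (v : Fin d → ℝ) (s : Finset α) (f : α → Fin d → ℝ) :
    (∑ a ∈ s, f a) ⬝ᵥ v = ∑ a ∈ s, f a ⬝ᵥ v := by
  unfold dotProduct
  simp only [Finset.sum_apply, Finset.sum_mul]
  exact Finset.sum_comm

lemma finsum_mulVec {α : Type*} (s : Finset α) (A : α → Matrix (Fin d) (Fin d) ℝ)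
    (v : Fin d → ℝ) : (∑ a ∈ s, A a) *ᵥ v = ∑ a ∈ s, A a *ᵥ v := by
  funext i
  simp only [Matrix.mulVec, dotProduct, Finset.sum_apply, Matrix.sum_apply, Finset.sum_mul]
  exact Finset.sum_comm

lemma mulVec_finsum {α : Type*} (M : Matrix (Fin d) (Fin d) ℝ) (s : Finset α)
    (f : α → Fin d → ℝ) : M *ᵥ (∑ a ∈ s, f a) = ∑ a ∈ s, M *ᵥ f a := by
  simp only [← Matrix.mulVecLin_apply, map_sum]

end Helpers

set_option maxHeartbeats 2000000 in
/-- Tracking lemma with orthogonal action sets. -/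
theorem stmt_3 {d t : ℕ} (hd : 1 ≤ d) (ht : 2 ≤ t)
    (L S lam γ : ℝ) (hL : 0 < L) (hS : 0 < S) (hlam : 0 < lam)
    (hγ : γ ∈ Set.Ioo (0 : ℝ) 1)
    (x : ℕ → Fin d → ℝ) (hx : ∀ s ∈ Finset.Icc 1 (t - 1), euclNorm (x s) ≤ L)
    (μ : ℝ → ℝ) (hμc : ContDiff ℝ 1 μ) (hμm : StrictMono μ)
    (kmu cmu : ℝ)
    (hkmu : kmu = sSup (deriv μ '' Set.Icc (-(L * S)) (L * S)))
    (hcmu : cmu = sInf (deriv μ '' Set.Icc (-(L * S)) (L * S)))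
    (hcmupos : 0 < cmu)
    (e : Fin d → Fin d → ℝ)
    (he : ∀ i j : Fin d, e i ⬝ᵥ e j = if i = j then (1 : ℝ) else 0)
    (hortho : ∀ s ∈ Finset.Icc 1 (t - 1), ∃ (c : ℝ) (i : Fin d), x s = c • e i)
    (θstar : ℕ → Fin d → ℝ) (hθstar : ∀ s ∈ Finset.Icc 1 t, euclNorm (θstar s) ≤ S)
    (θbar : Fin d → ℝ)
    (hθbar : gmap t γ lam cmu μ x θbar
      = (∑ s ∈ Finset.Icc 1 (t - 1), (γ ^ (t - 1 - s) * μ (x s ⬝ᵥ θstar s)) • x s)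
        + (lam * cmu) • θstar t) :
    ∀ D : ℕ, 1 ≤ D → D ≤ t - 1 →
      mnorm (designV t γ lam x * designV t γ lam x)⁻¹
          (gmap t γ lam cmu μ x θbar - gmap t γ lam cmu μ x (θstar t))
        ≤ (2 * kmu * L ^ 2 * S / lam) * (γ ^ D / (1 - γ))
          + kmu * ∑ s ∈ Finset.Icc (t - D) (t - 1), euclNorm (θstar s - θstar (s + 1)) := by
  intro D hD1 hD2
  obtain ⟨hγ0, hγ1⟩ := hγ
  -- choice of coefficients and directions
  have hch : ∀ s : ℕ, ∃ p : ℝ × Fin d, s ∈ Finset.Icc 1 (t - 1) → x s = p.1 • e p.2 := by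
    intro s
    by_cases hs : s ∈ Finset.Icc 1 (t - 1)
    · obtain ⟨c, i, h⟩ := hortho s hs
      exact ⟨(c, i), fun _ => h⟩
    · exact ⟨(0, ⟨0, hd⟩), fun h => absurd h hs⟩
  choose pr hpr using hch
  -- orthonormality in the other order
  have he' : ∀ i j : Fin d, (∑ k, e i k * e j k) = if i = j then (1 : ℝ) else 0 :=
    fun i j => he i j
  have hE2 : ∀ j k : Fin d, (∑ i, e i j * e i k) = if j = k then (1 : ℝ) else 0 := by
    have hE1 : (Matrix.of e) * (Matrix.of e)ᵀ = 1 := by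
      ext i j
      simp only [Matrix.mul_apply, Matrix.transpose_apply, Matrix.of_apply, Matrix.one_apply]
      exact he' i j
    have hE2' : (Matrix.of e)ᵀ * (Matrix.of e) = 1 := mul_eq_one_comm.mp hE1
    intro j k
    have h := congrFun (congrFun hE2' j) k
    simpa [Matrix.mul_apply, Matrix.transpose_apply, Matrix.of_apply, Matrix.one_apply] using h
  -- decomposition along the e basis
  have hdecomp : ∀ v : Fin d → ℝ, (∑ i, (e i ⬝ᵥ v) • e i) = v := by
    intro v
    funext j
    have h1 : (∑ i, (e i ⬝ᵥ v) • e i) j = ∑ i, (∑ k, e i k * v k) * e i j := by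
      simp [Finset.sum_apply, dotProduct]
    rw [h1]
    have h2 : ∀ i : Fin d, (∑ k, e i k * v k) * e i j = ∑ k, v k * (e i j * e i k) := by
      intro i; rw [Finset.sum_mul]; exact Finset.sum_congr rfl fun k _ => by ring
    rw [Finset.sum_congr rfl fun i _ => h2 i, Finset.sum_comm]
    have h3 : ∀ k : Fin d, (∑ i, v k * (e i j * e i k)) = v k * (if j = k then 1 else 0) := by
      intro k; rw [← Finset.mul_sum, hE2 j k]
    rw [Finset.sum_congr rfl fun k _ => h3 k]
    simp
  have hparseval : ∀ v : Fin d → ℝ, (∑ i, (e i ⬝ᵥ v) ^ 2) = v ⬝ᵥ v := by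
    intro v
    calc (∑ i, (e i ⬝ᵥ v) ^ 2) = ∑ i, ((e i ⬝ᵥ v) • e i) ⬝ᵥ v := by
          refine Finset.sum_congr rfl fun i _ => ?_
          rw [smul_dotProduct, smul_eq_mul, sq]
      _ = (∑ i, (e i ⬝ᵥ v) • e i) ⬝ᵥ v := (Helpers.finsum_dotProduct v _ _).symm
      _ = v ⬝ᵥ v := by rw [hdecomp]
  have hecoord : ∀ (i : Fin d) (v : Fin d → ℝ), |e i ⬝ᵥ v| ≤ euclNorm v := by
    intro i v
    have h1 : (e i ⬝ᵥ v) ^ 2 ≤ v ⬝ᵥ v := by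
      rw [← hparseval v]
      exact Finset.single_le_sum (f := fun j : Fin d => (e j ⬝ᵥ v) ^ 2)
        (fun j _ => sq_nonneg _) (Finset.mem_univ i)
    calc |e i ⬝ᵥ v| = Real.sqrt ((e i ⬝ᵥ v) ^ 2) := (Real.sqrt_sq_eq_abs _).symm
      _ ≤ Real.sqrt (v ⬝ᵥ v) := Real.sqrt_le_sqrt h1
      _ = euclNorm v := rfl
  have hxe : ∀ s ∈ Finset.Icc 1 (t - 1), ∀ i,
      x s ⬝ᵥ e i = if (pr s).2 = i then (pr s).1 else 0 := by
    intro s hs i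
    rw [hpr s hs, smul_dotProduct, he, smul_eq_mul, mul_ite, mul_one, mul_zero]
  have habsc : ∀ s ∈ Finset.Icc 1 (t - 1), |(pr s).1| ≤ L := by
    intro s hs
    have h1 := hx s hs
    rw [hpr s hs] at h1
    have h2 : ((pr s).1 • e (pr s).2) ⬝ᵥ ((pr s).1 • e (pr s).2) = (pr s).1 * (pr s).1 := by
      rw [smul_dotProduct, dotProduct_smul, he, if_pos rfl]
      simp
    unfold euclNorm at h1
    rw [h2, Real.sqrt_mul_self_eq_abs] at h1
    exact h1
  -- the matrix analysis
  have hmvv : ∀ (v w u : Fin d → ℝ), Matrix.vecMulVec v w *ᵥ u = (w ⬝ᵥ u) • v := by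
    intro v w u
    funext i
    simp only [Matrix.mulVec, dotProduct, Matrix.vecMulVec_apply, Pi.smul_apply, smul_eq_mul]
    rw [Finset.sum_mul]
    exact Finset.sum_congr rfl fun j _ => by ring
  set a : Fin d → ℝ := fun i => ∑ s ∈ Finset.Icc 1 (t - 1), γ ^ (t - 1 - s) * (x s ⬝ᵥ e i) ^ 2
    with ha_def
  have ha0 : ∀ i, 0 ≤ a i := by
    intro i
    exact Finset.sum_nonneg fun s _ => mul_nonneg (pow_nonneg hγ0.le _) (sq_nonneg _)
  have haL : ∀ i, 0 < a i + lam := fun i => by have := ha0 i; linarith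
  have hVe : ∀ i, designV t γ lam x *ᵥ e i = (a i + lam) • e i := by
    intro i
    unfold designV
    rw [Matrix.add_mulVec, Matrix.smul_mulVec, Matrix.one_mulVec, Helpers.finsum_mulVec]
    have hterm : ∀ s ∈ Finset.Icc 1 (t - 1),
        (γ ^ (t - 1 - s) • Matrix.vecMulVec (x s) (x s)) *ᵥ e i
          = (γ ^ (t - 1 - s) * (x s ⬝ᵥ e i) ^ 2) • e i := by
      intro s hs
      rw [Matrix.smul_mulVec, hmvv, hxe s hs i, hpr s hs]
      by_cases hij : (pr s).2 = i
      · rw [if_pos hij, hij]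
        rw [smul_smul, smul_smul]
        congr 1
        ring
      · rw [if_neg hij]
        simp
    rw [Finset.sum_congr rfl hterm, ← Finset.sum_smul, ← add_smul]
  have hAe : ∀ i, (designV t γ lam x * designV t γ lam x) *ᵥ e i
      = ((a i + lam) ^ 2) • e i := by
    intro i
    rw [← Matrix.mulVec_mulVec, hVe, Matrix.mulVec_smul, hVe, smul_smul, sq]
  have hkpos : ∀ i, (0 : ℝ) < (a i + lam) ^ 2 := fun i => pow_pos (haL i) 2
  have hVsymm : (designV t γ lam x)ᵀ = designV t γ lam x := by
    unfold designV
    rw [Matrix.transpose_add, Matrix.transpose_smul, Matrix.transpose_one, Matrix.transpose_sum]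
    congr 1
    refine Finset.sum_congr rfl fun s _ => ?_
    rw [Matrix.transpose_smul]
    congr 1
    ext i j
    simp [Matrix.vecMulVec_apply, Matrix.transpose_apply, mul_comm]
  have hker : ∀ v : Fin d → ℝ, (designV t γ lam x * designV t γ lam x) *ᵥ v = 0 → v = 0 := by
    intro v hv
    have hsym : (designV t γ lam x * designV t γ lam x)ᵀ
        = designV t γ lam x * designV t γ lam x := by
      rw [Matrix.transpose_mul, hVsymm]
    have hcoord : ∀ i, e i ⬝ᵥ v = 0 := by
      intro i
      have h1 : e i ⬝ᵥ ((designV t γ lam x * designV t γ lam x) *ᵥ v) = 0 := by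
        rw [hv, dotProduct_zero]
      rw [Matrix.dotProduct_mulVec] at h1
      have h2 : e i ᵥ* (designV t γ lam x * designV t γ lam x)
          = (designV t γ lam x * designV t γ lam x) *ᵥ e i := by
        conv_lhs => rw [← hsym]
        rw [Matrix.vecMul_transpose]
      rw [h2, hAe, smul_dotProduct, smul_eq_mul] at h1
      exact (mul_eq_zero.mp h1).resolve_left (ne_of_gt (hkpos i))
    have hv2 := hdecomp v
    rw [← hv2]
    simp [hcoord]
  have hdet : (designV t γ lam x * designV t γ lam x).det ≠ 0 := by
    intro h
    obtain ⟨v, hv0, hv⟩ := Matrix.exists_mulVec_eq_zero_iff.mpr h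
    exact hv0 (hker v hv)
  have hinv : (designV t γ lam x * designV t γ lam x)⁻¹
      * (designV t γ lam x * designV t γ lam x) = 1 :=
    Matrix.nonsing_inv_mul _ (isUnit_iff_ne_zero.mpr hdet)
  have hMe : ∀ i, (designV t γ lam x * designV t γ lam x)⁻¹ *ᵥ e i
      = ((a i + lam) ^ 2)⁻¹ • e i := by
    intro i
    have h1 : (designV t γ lam x * designV t γ lam x)⁻¹
        *ᵥ ((designV t γ lam x * designV t γ lam x) *ᵥ e i) = e i := by
      rw [Matrix.mulVec_mulVec, hinv, Matrix.one_mulVec]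
    rw [hAe, Matrix.mulVec_smul] at h1
    calc (designV t γ lam x * designV t γ lam x)⁻¹ *ᵥ e i
        = ((a i + lam) ^ 2)⁻¹
            • (((a i + lam) ^ 2) • ((designV t γ lam x * designV t γ lam x)⁻¹ *ᵥ e i)) := by
          rw [smul_smul, inv_mul_cancel₀ (ne_of_gt (hkpos i)), one_smul]
      _ = ((a i + lam) ^ 2)⁻¹ • e i := by rw [h1]
  -- the vector w
  set Δ : ℕ → ℝ := fun s => μ (x s ⬝ᵥ θstar s) - μ (x s ⬝ᵥ θstar t) with hΔ_def
  set w := gmap t γ lam cmu μ x θbar - gmap t γ lam cmu μ x (θstar t) with hw_def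
  have hw : w = ∑ s ∈ Finset.Icc 1 (t - 1), (γ ^ (t - 1 - s) * Δ s) • x s := by
    rw [hw_def, hθbar]
    unfold gmap
    rw [add_sub_add_right_eq_sub, ← Finset.sum_sub_distrib]
    refine Finset.sum_congr rfl fun s _ => ?_
    rw [← sub_smul, ← mul_sub]
  have hwc : ∀ i, e i ⬝ᵥ w
      = ∑ s ∈ Finset.Icc 1 (t - 1), γ ^ (t - 1 - s) * Δ s * (x s ⬝ᵥ e i) := by
    intro i
    rw [hw, Helpers.dotProduct_finsum]
    refine Finset.sum_congr rfl fun s _ => ?_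
    rw [dotProduct_smul, smul_eq_mul, dotProduct_comm (e i) (x s)]
  have hquad : w ⬝ᵥ ((designV t γ lam x * designV t γ lam x)⁻¹ *ᵥ w)
      = ∑ i, ((e i ⬝ᵥ w) / (a i + lam)) ^ 2 := by
    have h1 : (designV t γ lam x * designV t γ lam x)⁻¹ *ᵥ w
        = ∑ i, ((e i ⬝ᵥ w) * ((a i + lam) ^ 2)⁻¹) • e i := by
      conv_lhs => rw [← hdecomp w]
      rw [Helpers.mulVec_finsum]
      refine Finset.sum_congr rfl fun i _ => ?_
      rw [Matrix.mulVec_smul, hMe, smul_smul]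
    rw [h1, Helpers.dotProduct_finsum]
    refine Finset.sum_congr rfl fun i _ => ?_
    rw [dotProduct_smul, smul_eq_mul, dotProduct_comm w (e i), div_pow,
      div_eq_mul_inv]
    ring
  have hmnormval : mnorm (designV t γ lam x * designV t γ lam x)⁻¹ w
      = euclNorm (fun i => (e i ⬝ᵥ w) / (a i + lam)) := by
    unfold mnorm euclNorm
    rw [show (designV t γ lam x * designV t γ lam x)⁻¹.mulVec w
        = (designV t γ lam x * designV t γ lam x)⁻¹ *ᵥ w from rfl, hquad]
    congr 1
    unfold dotProduct
    exact Finset.sum_congr rfl fun i _ => pow_two _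
  -- split old and recent
  have hsplit : Finset.Icc 1 (t - 1)
      = Finset.Icc 1 (t - 1 - D) ∪ Finset.Icc (t - D) (t - 1) := by
    ext n; simp only [Finset.mem_Icc, Finset.mem_union]; omega
  have hdisj : Disjoint (Finset.Icc 1 (t - 1 - D)) (Finset.Icc (t - D) (t - 1)) := by
    rw [Finset.disjoint_left]
    intro n h1 h2
    simp only [Finset.mem_Icc] at h1 h2
    omega
  set uold : Fin d → ℝ := fun i =>
    (∑ s ∈ Finset.Icc 1 (t - 1 - D), γ ^ (t - 1 - s) * Δ s * (x s ⬝ᵥ e i)) / (a i + lam)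
    with huold
  set urec : Fin d → ℝ := fun i =>
    (∑ s ∈ Finset.Icc (t - D) (t - 1), γ ^ (t - 1 - s) * Δ s * (x s ⬝ᵥ e i)) / (a i + lam)
    with hurec
  have husum : (fun i => (e i ⬝ᵥ w) / (a i + lam)) = uold + urec := by
    funext i
    simp only [huold, hurec, Pi.add_apply]
    rw [hwc i, hsplit, Finset.sum_union hdisj, add_div]
  -- bounds on Δ
  have hkm0 : 0 ≤ kmu := by
    have h0mem : (0 : ℝ) ∈ Set.Icc (-(L * S)) (L * S) := by
      constructor <;> nlinarith
    have hcont : Continuous (deriv μ) := hμc.continuous_deriv le_rfl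
    have himg : IsCompact (deriv μ '' Set.Icc (-(L * S)) (L * S)) := isCompact_Icc.image hcont
    have h1 : deriv μ 0 ≤ kmu := by
      rw [hkmu]; exact le_csSup himg.bddAbove ⟨0, h0mem, rfl⟩
    have h2 : 0 ≤ deriv μ 0 :=
      Helpers.deriv_nonneg_of_strictMono hμm ((hμc.differentiable one_ne_zero) 0)
    linarith
  have hsubT : ∀ s ∈ Finset.Icc 1 (t - 1), s ∈ Finset.Icc 1 t := by
    intro s hs
    simp only [Finset.mem_Icc] at hs ⊢
    omega
  have htmem : t ∈ Finset.Icc 1 t := by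
    simp only [Finset.mem_Icc]
    omega
  have hdotb : ∀ s ∈ Finset.Icc 1 (t - 1), ∀ r ∈ Finset.Icc 1 t,
      |x s ⬝ᵥ θstar r| ≤ L * S := by
    intro s hs r hr
    rw [hpr s hs, smul_dotProduct, smul_eq_mul, abs_mul]
    exact mul_le_mul (habsc s hs) ((hecoord _ _).trans (hθstar r hr)) (abs_nonneg _) hL.le
  have hΔ1 : ∀ s ∈ Finset.Icc 1 (t - 1),
      |Δ s| ≤ kmu * |x s ⬝ᵥ θstar s - x s ⬝ᵥ θstar t| := by
    intro s hs
    have h1 := hdotb s hs s (hsubT s hs)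
    have h2 := hdotb s hs t htmem
    have h3 := Helpers.lip hμc hμm (R := L * S) (by positivity) h1 h2
    rw [← hkmu] at h3
    simpa only [hΔ_def] using h3
  have hΔ2 : ∀ s ∈ Finset.Icc 1 (t - 1), |Δ s| ≤ 2 * kmu * L * S := by
    intro s hs
    refine (hΔ1 s hs).trans ?_
    have h1 := hdotb s hs s (hsubT s hs)
    have h2 := hdotb s hs t htmem
    have habs : |x s ⬝ᵥ θstar s - x s ⬝ᵥ θstar t| ≤ 2 * (L * S) :=
      (abs_sub _ _).trans (by linarith)
    calc kmu * |x s ⬝ᵥ θstar s - x s ⬝ᵥ θstar t| ≤ kmu * (2 * (L * S)) :=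
          mul_le_mul_of_nonneg_left habs hkm0
      _ = 2 * kmu * L * S := by ring
  -- old part
  have hgeo : ∑ s ∈ Finset.Icc 1 (t - 1 - D), γ ^ (t - 1 - s) ≤ γ ^ D / (1 - γ) := by
    have h := Helpers.geom_bound hγ0 hγ1 (t - 1 - D) (t - 1) (by omega)
    have hDD : t - 1 - (t - 1 - D) = D := by omega
    rwa [hDD] at h
  have hsubold : ∀ s ∈ Finset.Icc 1 (t - 1 - D), s ∈ Finset.Icc 1 (t - 1) := by
    intro s hs
    simp only [Finset.mem_Icc] at hs ⊢
    omega
  have hold : euclNorm uold ≤ (2 * kmu * L ^ 2 * S / lam) * (γ ^ D / (1 - γ)) := by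
    have h1 : ∀ i, |uold i|
        ≤ (∑ s ∈ Finset.Icc 1 (t - 1 - D),
            γ ^ (t - 1 - s) * (2 * kmu * L * S) * |x s ⬝ᵥ e i|) / lam := by
      intro i
      simp only [huold]
      rw [abs_div, abs_of_pos (haL i)]
      have hnum : |∑ s ∈ Finset.Icc 1 (t - 1 - D), γ ^ (t - 1 - s) * Δ s * (x s ⬝ᵥ e i)|
          ≤ ∑ s ∈ Finset.Icc 1 (t - 1 - D),
              γ ^ (t - 1 - s) * (2 * kmu * L * S) * |x s ⬝ᵥ e i| := by
        refine (Finset.abs_sum_le_sum_abs _ _).trans (Finset.sum_le_sum fun s hs => ?_)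
        rw [abs_mul, abs_mul, abs_of_pos (pow_pos hγ0 _)]
        exact mul_le_mul_of_nonneg_right
          (mul_le_mul_of_nonneg_left (hΔ2 s (hsubold s hs)) (pow_nonneg hγ0.le _))
          (abs_nonneg _)
      refine div_le_div₀ ?_ hnum hlam ?_
      · refine Finset.sum_nonneg fun s _ => ?_
        refine mul_nonneg (mul_nonneg (pow_nonneg hγ0.le _) ?_) (abs_nonneg _)
        exact mul_nonneg (mul_nonneg (mul_nonneg (by norm_num : (0:ℝ) ≤ 2) hkm0) hL.le) hS.le
      · linarith [ha0 i]
    have hbnn : ∀ i, 0 ≤ (∑ s ∈ Finset.Icc 1 (t - 1 - D),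
        γ ^ (t - 1 - s) * (2 * kmu * L * S) * |x s ⬝ᵥ e i|) / lam := by
      intro i
      refine div_nonneg (Finset.sum_nonneg fun s _ => ?_) hlam.le
      refine mul_nonneg (mul_nonneg (pow_nonneg hγ0.le _) ?_) (abs_nonneg _)
      exact mul_nonneg (mul_nonneg (mul_nonneg (by norm_num : (0:ℝ) ≤ 2) hkm0) hL.le) hS.le
    have h2 : euclNorm uold ≤ ∑ i, (∑ s ∈ Finset.Icc 1 (t - 1 - D),
        γ ^ (t - 1 - s) * (2 * kmu * L * S) * |x s ⬝ᵥ e i|) / lam :=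
      (Helpers.enorm_mono h1).trans (Helpers.enorm_le_sum hbnn)
    have h3 : ∑ i, (∑ s ∈ Finset.Icc 1 (t - 1 - D),
          γ ^ (t - 1 - s) * (2 * kmu * L * S) * |x s ⬝ᵥ e i|) / lam
        = ∑ s ∈ Finset.Icc 1 (t - 1 - D),
            γ ^ (t - 1 - s) * (2 * kmu * L * S) * (∑ i, |x s ⬝ᵥ e i|) / lam := by
      rw [← Finset.sum_div, Finset.sum_comm, ← Finset.sum_div]
      congr 1
      refine Finset.sum_congr rfl fun s _ => ?_
      rw [Finset.mul_sum]
    have h4 : ∀ s ∈ Finset.Icc 1 (t - 1 - D), (∑ i, |x s ⬝ᵥ e i|) ≤ L := by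
      intro s hs
      have hsT := hsubold s hs
      have h5 : ∀ i, |x s ⬝ᵥ e i| = if (pr s).2 = i then |(pr s).1| else 0 := by
        intro i
        rw [hxe s hsT i]
        split <;> simp
      rw [Finset.sum_congr rfl fun i _ => h5 i, Finset.sum_ite_eq, if_pos (Finset.mem_univ _)]
      exact habsc s hsT
    have hC : 0 ≤ 2 * kmu * L ^ 2 * S / lam := by
      refine div_nonneg ?_ hlam.le
      exact mul_nonneg (mul_nonneg (mul_nonneg (by norm_num : (0:ℝ) ≤ 2) hkm0)
        (pow_nonneg hL.le 2)) hS.le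
    calc euclNorm uold
        ≤ ∑ i, (∑ s ∈ Finset.Icc 1 (t - 1 - D),
            γ ^ (t - 1 - s) * (2 * kmu * L * S) * |x s ⬝ᵥ e i|) / lam := h2
      _ = ∑ s ∈ Finset.Icc 1 (t - 1 - D),
            γ ^ (t - 1 - s) * (2 * kmu * L * S) * (∑ i, |x s ⬝ᵥ e i|) / lam := h3
      _ ≤ ∑ s ∈ Finset.Icc 1 (t - 1 - D),
            γ ^ (t - 1 - s) * (2 * kmu * L * S) * L / lam := by
          refine Finset.sum_le_sum fun s hs => ?_
          refine div_le_div₀ ?_ ?_ hlam le_rfl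
          · exact mul_nonneg (mul_nonneg (pow_nonneg hγ0.le _)
              (mul_nonneg (mul_nonneg (mul_nonneg (by norm_num : (0:ℝ) ≤ 2) hkm0) hL.le) hS.le))
              hL.le
          · refine mul_le_mul_of_nonneg_left (h4 s hs) ?_
            exact mul_nonneg (pow_nonneg hγ0.le _)
              (mul_nonneg (mul_nonneg (mul_nonneg (by norm_num : (0:ℝ) ≤ 2) hkm0) hL.le) hS.le)
      _ = (2 * kmu * L ^ 2 * S / lam) * ∑ s ∈ Finset.Icc 1 (t - 1 - D), γ ^ (t - 1 - s) := by
          rw [Finset.mul_sum]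
          refine Finset.sum_congr rfl fun s _ => ?_
          ring
      _ ≤ (2 * kmu * L ^ 2 * S / lam) * (γ ^ D / (1 - γ)) :=
          mul_le_mul_of_nonneg_left hgeo hC
  -- recent part
  have hsubrec : ∀ s ∈ Finset.Icc (t - D) (t - 1), s ∈ Finset.Icc 1 (t - 1) := by
    intro s hs
    simp only [Finset.mem_Icc] at hs ⊢
    omega
  set B : Fin d → ℝ := fun i =>
    ∑ r ∈ Finset.Icc (t - D) (t - 1), |e i ⬝ᵥ (θstar r - θstar (r + 1))| with hB
  have hBnn : ∀ i, 0 ≤ B i := fun i => Finset.sum_nonneg fun r _ => abs_nonneg _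
  have hcoordtel : ∀ s ∈ Finset.Icc (t - D) (t - 1), ∀ i,
      |e i ⬝ᵥ (θstar s - θstar t)| ≤ B i := by
    intro s hs i
    have hs' := Finset.mem_Icc.mp hs
    have hst : s ≤ t := by omega
    have htel := Helpers.telescope θstar t s hst
    rw [htel, Helpers.dotProduct_finsum]
    refine (Finset.abs_sum_le_sum_abs _ _).trans ?_
    simp only [hB]
    refine Finset.sum_le_sum_of_subset_of_nonneg ?_ (fun r _ _ => abs_nonneg _)
    intro r hr
    have hr' := Finset.mem_Ico.mp hr
    simp only [Finset.mem_Icc]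
    omega
  have hrecbound : ∀ i, |urec i| ≤ kmu * B i := by
    intro i
    simp only [hurec]
    rw [abs_div, abs_of_pos (haL i), div_le_iff₀ (haL i)]
    have key : ∀ s ∈ Finset.Icc (t - D) (t - 1),
        |γ ^ (t - 1 - s) * Δ s * (x s ⬝ᵥ e i)|
          ≤ kmu * B i * (γ ^ (t - 1 - s) * (x s ⬝ᵥ e i) ^ 2) := by
      intro s hs
      have hsT := hsubrec s hs
      by_cases hij : (pr s).2 = i
      · have hxei : x s ⬝ᵥ e i = (pr s).1 := by rw [hxe s hsT i, if_pos hij]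
        have hdd : x s ⬝ᵥ θstar s - x s ⬝ᵥ θstar t
            = (pr s).1 * (e i ⬝ᵥ (θstar s - θstar t)) := by
          rw [hpr s hsT, hij, smul_dotProduct, smul_dotProduct,
            dotProduct_sub, smul_eq_mul, smul_eq_mul]
          ring
        have hΔb : |Δ s| ≤ kmu * (|(pr s).1| * B i) := by
          refine (hΔ1 s hsT).trans ?_
          rw [hdd, abs_mul]
          exact mul_le_mul_of_nonneg_left
            (mul_le_mul_of_nonneg_left (hcoordtel s hs i) (abs_nonneg _)) hkm0
        rw [abs_mul, abs_mul, abs_of_pos (pow_pos hγ0 _), hxei]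
        calc γ ^ (t - 1 - s) * |Δ s| * |(pr s).1|
            ≤ γ ^ (t - 1 - s) * (kmu * (|(pr s).1| * B i)) * |(pr s).1| :=
              mul_le_mul_of_nonneg_right
                (mul_le_mul_of_nonneg_left hΔb (pow_nonneg hγ0.le _)) (abs_nonneg _)
          _ = kmu * B i * (γ ^ (t - 1 - s) * (|(pr s).1| * |(pr s).1|)) := by ring
          _ = kmu * B i * (γ ^ (t - 1 - s) * (pr s).1 ^ 2) := by
              rw [abs_mul_abs_self, sq]
      · have hxei : x s ⬝ᵥ e i = 0 := by rw [hxe s hsT i, if_neg hij]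
        rw [hxei]
        simp
    calc |∑ s ∈ Finset.Icc (t - D) (t - 1), γ ^ (t - 1 - s) * Δ s * (x s ⬝ᵥ e i)|
        ≤ ∑ s ∈ Finset.Icc (t - D) (t - 1),
            kmu * B i * (γ ^ (t - 1 - s) * (x s ⬝ᵥ e i) ^ 2) :=
          (Finset.abs_sum_le_sum_abs _ _).trans (Finset.sum_le_sum key)
      _ = kmu * B i * ∑ s ∈ Finset.Icc (t - D) (t - 1),
            γ ^ (t - 1 - s) * (x s ⬝ᵥ e i) ^ 2 := (Finset.mul_sum _ _ _).symm
      _ ≤ kmu * B i * (a i + lam) := by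
          refine mul_le_mul_of_nonneg_left ?_ (mul_nonneg hkm0 (hBnn i))
          have hsum : ∑ s ∈ Finset.Icc (t - D) (t - 1), γ ^ (t - 1 - s) * (x s ⬝ᵥ e i) ^ 2
              ≤ a i := by
            simp only [ha_def]
            refine Finset.sum_le_sum_of_subset_of_nonneg hsubrec
              (fun s _ _ => mul_nonneg (pow_nonneg hγ0.le _) (sq_nonneg _))
          linarith
  have hrec : euclNorm urec
      ≤ kmu * ∑ r ∈ Finset.Icc (t - D) (t - 1), euclNorm (θstar r - θstar (r + 1)) := by
    have h1 : euclNorm urec ≤ euclNorm (fun i => kmu * B i) := Helpers.enorm_mono hrecbound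
    rw [Helpers.enorm_smul_nonneg hkm0 B] at h1
    have h2 : euclNorm B ≤ ∑ r ∈ Finset.Icc (t - D) (t - 1), euclNorm (θstar r - θstar (r + 1)) := by
      have hBsum : B = ∑ r ∈ Finset.Icc (t - D) (t - 1),
          (fun i => |e i ⬝ᵥ (θstar r - θstar (r + 1))|) := by
        funext i
        simp only [hB, Finset.sum_apply]
      rw [hBsum]
      refine (Helpers.enorm_sum_le _ _).trans ?_
      refine Finset.sum_le_sum fun r _ => ?_
      rw [Helpers.enorm_abs]
      have h3 : euclNorm (fun i => e i ⬝ᵥ (θstar r - θstar (r + 1)))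
          = euclNorm (θstar r - θstar (r + 1)) := by
        unfold euclNorm
        congr 1
        have h4 : (fun i => e i ⬝ᵥ (θstar r - θstar (r + 1)))
              ⬝ᵥ (fun i => e i ⬝ᵥ (θstar r - θstar (r + 1)))
            = ∑ i, (e i ⬝ᵥ (θstar r - θstar (r + 1))) ^ 2 := by
          unfold dotProduct
          exact Finset.sum_congr rfl fun i _ => (pow_two _).symm
        rw [h4, hparseval]
      exact le_of_eq h3
    calc euclNorm urec ≤ kmu * euclNorm B := h1
      _ ≤ kmu * ∑ r ∈ Finset.Icc (t - D) (t - 1), euclNorm (θstar r - θstar (r + 1)) :=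
          mul_le_mul_of_nonneg_left h2 hkm0
  calc mnorm (designV t γ lam x * designV t γ lam x)⁻¹ w
      = euclNorm (fun i => (e i ⬝ᵥ w) / (a i + lam)) := hmnormval
    _ = euclNorm (uold + urec) := by rw [husum]
    _ ≤ euclNorm uold + euclNorm urec := Helpers.enorm_add_le _ _
    _ ≤ (2 * kmu * L ^ 2 * S / lam) * (γ ^ D / (1 - γ))
        + kmu * ∑ s ∈ Finset.Icc (t - D) (t - 1), euclNorm (θstar s - θstar (s + 1)) :=
        add_le_add hold hrec
end
end

section
/- Projection drift bound: let β > 0, let θ̂, θ̄ ∈ ℝ^d with θ̄ ∈ E_β(θ̂), and let θ* ∈ Θ. Suppose θ^p minimizes θ ↦ ‖g_t(θ) − g_t(θ̂)‖_{V_t^{-2}} over the set {θ ∈ ℝ^d : Θ ∩ E_β(θ) ≠ ∅}. Then ‖g_t(θ^p) − g_t(θ̂)‖_{V_t^{-2}} ≤ ‖g_t(θ̄) − g_t(θ*)‖_{V_t^{-2}}. -/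
open Finset Matrix

noncomputable section

/-- Euclidean norm of a vector in `ℝ^d`. -/
def eucNorm {d : ℕ} (v : Fin d → ℝ) : ℝ := Real.sqrt (v ⬝ᵥ v)

lemma dot_self_nonneg {d : ℕ} (v : Fin d → ℝ) : 0 ≤ v ⬝ᵥ v :=
  Finset.sum_nonneg fun i _ => mul_self_nonneg _

lemma sum_dot {d : ℕ} {α : Type*} (F : Finset α) (f : α → Fin d → ℝ) (v : Fin d → ℝ) :
    (∑ s ∈ F, f s) ⬝ᵥ v = ∑ s ∈ F, f s ⬝ᵥ v := by
  simp only [dotProduct, Finset.sum_apply, Finset.sum_mul]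
  rw [Finset.sum_comm]

lemma exists_gmap_eq {d t : ℕ} {γ lam cmu : ℝ} (hγ : 0 ≤ γ) (hc : 0 < lam * cmu)
    {μ : ℝ → ℝ} (hμ : Continuous μ) (hm : Monotone μ) (x : ℕ → Fin d → ℝ) (y : Fin d → ℝ) :
    ∃ θ : Fin d → ℝ, gmap t γ lam cmu μ x θ = y := by
  classical
  set F := Finset.Icc 1 (t - 1) with hF
  set M : ℝ → ℝ := fun z => ∫ u in (0:ℝ)..z, μ u with hMdef
  have hM : ∀ z : ℝ, HasDerivAt M (μ z) z := by
    intro z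
    exact intervalIntegral.integral_hasDerivAt_right (hμ.intervalIntegrable 0 z)
      (hμ.stronglyMeasurableAtFilter _ _) hμ.continuousAt
  have hMc : Continuous M := by
    rw [continuous_iff_continuousAt]; exact fun z => (hM z).continuousAt
  -- lower bound for M
  have hM0 : M 0 = 0 := by simp [hMdef]
  have hMlb : ∀ z : ℝ, μ 0 * z ≤ M z := by
    intro z
    rcases le_total 0 z with hz | hz
    · have : ∫ u in (0:ℝ)..z, μ 0 ≤ ∫ u in (0:ℝ)..z, μ u := by
        apply intervalIntegral.integral_mono_on hz (intervalIntegrable_const)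
          (hμ.intervalIntegrable 0 z)
        intro u hu; exact hm hu.1
      simpa [mul_comm] using this
    · have h2 : ∫ u in z..(0:ℝ), μ u ≤ ∫ u in z..(0:ℝ), μ 0 := by
        apply intervalIntegral.integral_mono_on hz (hμ.intervalIntegrable z 0)
          (intervalIntegrable_const)
        intro u hu; exact hm hu.2
      have h3 : M z = -∫ u in z..(0:ℝ), μ u := intervalIntegral.integral_symm z 0
      rw [h3]
      simp only [intervalIntegral.integral_const, smul_eq_mul] at h2 ⊢
      nlinarith [h2]
  set c : ℝ := lam * cmu / 2 with hcdef
  have hcpos : 0 < c := by positivity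
  set Φ : (Fin d → ℝ) → ℝ := fun θ =>
    (∑ s ∈ F, γ ^ (t - 1 - s) * M (x s ⬝ᵥ θ)) + c * (θ ⬝ᵥ θ) - y ⬝ᵥ θ with hΦdef
  have hdotc : ∀ w : Fin d → ℝ, Continuous fun θ : Fin d → ℝ => w ⬝ᵥ θ := by
    intro w
    exact continuous_finset_sum _ fun i _ => continuous_const.mul (continuous_apply i)
  have hselfc : Continuous fun θ : Fin d → ℝ => θ ⬝ᵥ θ :=
    continuous_finset_sum _ fun i _ => (continuous_apply i).mul (continuous_apply i)
  have hΦc : Continuous Φ := by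
    apply Continuous.sub
    · apply Continuous.add
      · exact continuous_finset_sum _ fun s _ =>
          continuous_const.mul (hMc.comp (hdotc (x s)))
      · exact continuous_const.mul hselfc
    · exact hdotc y
  -- coercivity
  set C : ℝ := (∑ s ∈ F, γ ^ (t - 1 - s) * |μ 0| * (∑ i, |x s i|)) + ∑ i, |y i| with hCdef
  have hC0 : 0 ≤ C := by
    apply add_nonneg
    · exact Finset.sum_nonneg fun s _ => by positivity
    · exact Finset.sum_nonneg fun i _ => abs_nonneg _
  set R : ℝ := (C + 1) / c with hRdef
  have hRpos : 0 < R := by positivity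
  -- coordinate bound
  have hcoord : ∀ (θ : Fin d → ℝ) (i : Fin d), |θ i| ≤ Real.sqrt (θ ⬝ᵥ θ) := by
    intro θ i
    have h1 : θ i * θ i ≤ θ ⬝ᵥ θ :=
      Finset.single_le_sum (f := fun j => θ j * θ j)
        (fun j _ => mul_self_nonneg _) (Finset.mem_univ i)
    have := Real.sqrt_le_sqrt h1
    rwa [Real.sqrt_mul_self_eq_abs] at this
  have hdotlb : ∀ (w θ : Fin d → ℝ), |w ⬝ᵥ θ| ≤ (∑ i, |w i|) * Real.sqrt (θ ⬝ᵥ θ) := by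
    intro w θ
    calc |w ⬝ᵥ θ| ≤ ∑ i, |w i * θ i| := Finset.abs_sum_le_sum_abs _ _
    _ ≤ ∑ i, |w i| * Real.sqrt (θ ⬝ᵥ θ) := by
        apply Finset.sum_le_sum; intro i _
        rw [abs_mul]
        exact mul_le_mul_of_nonneg_left (hcoord θ i) (abs_nonneg _)
    _ = (∑ i, |w i|) * Real.sqrt (θ ⬝ᵥ θ) := by rw [Finset.sum_mul]
  have hΦlb : ∀ θ : Fin d → ℝ, Real.sqrt (θ ⬝ᵥ θ) * (c * Real.sqrt (θ ⬝ᵥ θ) - C) ≤ Φ θ := by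
    intro θ
    set r := Real.sqrt (θ ⬝ᵥ θ) with hr
    have hr2 : r * r = θ ⬝ᵥ θ := Real.mul_self_sqrt (dot_self_nonneg θ)
    have h1 : ∀ s ∈ F, -(γ ^ (t - 1 - s) * |μ 0| * (∑ i, |x s i|)) * r
        ≤ γ ^ (t - 1 - s) * M (x s ⬝ᵥ θ) := by
      intro s _
      have := hMlb (x s ⬝ᵥ θ)
      have h2 : -( |μ 0| * ((∑ i, |x s i|) * r)) ≤ μ 0 * (x s ⬝ᵥ θ) := by
        have := hdotlb (x s) θ
        have habs : |μ 0 * (x s ⬝ᵥ θ)| ≤ |μ 0| * ((∑ i, |x s i|) * r) := by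
          rw [abs_mul]
          exact mul_le_mul_of_nonneg_left (hdotlb (x s) θ) (abs_nonneg _)
        nlinarith [neg_abs_le (μ 0 * (x s ⬝ᵥ θ))]
      have hγp : (0:ℝ) ≤ γ ^ (t - 1 - s) := pow_nonneg hγ _
      calc -(γ ^ (t - 1 - s) * |μ 0| * (∑ i, |x s i|)) * r
          = γ ^ (t - 1 - s) * (-( |μ 0| * ((∑ i, |x s i|) * r))) := by ring
        _ ≤ γ ^ (t - 1 - s) * (μ 0 * (x s ⬝ᵥ θ)) :=
            mul_le_mul_of_nonneg_left h2 hγp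
        _ ≤ γ ^ (t - 1 - s) * M (x s ⬝ᵥ θ) :=
            mul_le_mul_of_nonneg_left (hMlb _) hγp
    have hsum : ∑ s ∈ F, (-(γ ^ (t - 1 - s) * |μ 0| * (∑ i, |x s i|)) * r)
        ≤ ∑ s ∈ F, γ ^ (t - 1 - s) * M (x s ⬝ᵥ θ) := Finset.sum_le_sum h1
    have hy : -((∑ i, |y i|) * r) ≤ - (y ⬝ᵥ θ) := by
      have h := hdotlb y θ
      rw [← hr] at h
      linarith [le_abs_self (y ⬝ᵥ θ)]
    have hsum2 : ∑ s ∈ F, (-(γ ^ (t - 1 - s) * |μ 0| * (∑ i, |x s i|)) * r)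
        = -((∑ s ∈ F, γ ^ (t - 1 - s) * |μ 0| * (∑ i, |x s i|)) * r) := by
      rw [← Finset.sum_mul, Finset.sum_neg_distrib, neg_mul]
    have hCr : C * r = (∑ s ∈ F, γ ^ (t - 1 - s) * |μ 0| * (∑ i, |x s i|)) * r
        + (∑ i, |y i|) * r := by rw [hCdef, add_mul]
    have key : c * (θ ⬝ᵥ θ) - C * r ≤ Φ θ := by
      rw [hΦdef]
      simp only
      linarith [hsum, hy, hsum2, hCr]
    calc r * (c * r - C) = c * (r * r) - C * r := by ring
      _ = c * (θ ⬝ᵥ θ) - C * r := by rw [hr2]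
      _ ≤ Φ θ := key
  -- compact sublevel-type set
  set K : Set (Fin d → ℝ) := {θ | θ ⬝ᵥ θ ≤ R ^ 2} with hKdef
  have hKclosed : IsClosed K := isClosed_le hselfc continuous_const
  have hKbdd : Bornology.IsBounded K := by
    apply Bornology.IsBounded.subset (Metric.isBounded_closedBall (x := (0 : Fin d → ℝ)) (r := R))
    intro θ hθ
    rw [Metric.mem_closedBall, dist_zero_right]
    rw [pi_norm_le_iff_of_nonneg hRpos.le]
    intro i
    have h1 : θ i * θ i ≤ θ ⬝ᵥ θ :=
      Finset.single_le_sum (f := fun j => θ j * θ j)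
        (fun j _ => mul_self_nonneg _) (Finset.mem_univ i)
    have h2 : θ i ^ 2 ≤ R ^ 2 := by
      have := hθ; rw [hKdef] at this; simp only [Set.mem_setOf_eq] at this; nlinarith
    rw [Real.norm_eq_abs]
    exact abs_le_of_sq_le_sq' h2 hRpos.le |>.2 |> fun h => abs_le.mpr (abs_le_of_sq_le_sq' h2 hRpos.le)
  have hKcompact : IsCompact K := Metric.isCompact_of_isClosed_isBounded hKclosed hKbdd
  have h0K : (0 : Fin d → ℝ) ∈ K := by
    rw [hKdef]; simp only [Set.mem_setOf_eq]
    have : (0 : Fin d → ℝ) ⬝ᵥ 0 = 0 := zero_dotProduct 0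
    rw [this]; positivity
  obtain ⟨θ0, hθ0K, hmin0⟩ := hKcompact.exists_isMinOn ⟨0, h0K⟩ hΦc.continuousOn
  have hΦ0 : Φ 0 = 0 := by
    rw [hΦdef]; simp [hM0, dotProduct_zero]
  have hΦθ0 : Φ θ0 ≤ 0 := by
    have := isMinOn_iff.mp hmin0 0 h0K; rwa [hΦ0] at this
  -- θ0 is interior
  have hθ0int : θ0 ⬝ᵥ θ0 < R ^ 2 := by
    set r := Real.sqrt (θ0 ⬝ᵥ θ0) with hrd
    have hrnn : 0 ≤ r := Real.sqrt_nonneg _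
    have hr2 : r * r = θ0 ⬝ᵥ θ0 := Real.mul_self_sqrt (dot_self_nonneg θ0)
    have hb := hΦlb θ0
    rw [← hrd] at hb
    have hrC : r * (c * r - C) ≤ 0 := le_trans hb hΦθ0
    have hrlt : r < R := by
      rcases eq_or_lt_of_le hrnn with h | h
      · rw [← h]; exact hRpos
      · by_contra hcon
        push_neg at hcon
        have : 0 < r * (c * r - C) := by
          apply mul_pos h
          have : C + 1 ≤ c * r := by
            rw [hRdef] at hcon
            calc C + 1 = c * ((C + 1) / c) := by field_simp
            _ ≤ c * r := by apply mul_le_mul_of_nonneg_left hcon hcpos.le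
          linarith
        linarith
    calc θ0 ⬝ᵥ θ0 = r * r := hr2.symm
      _ < R * R := by nlinarith
      _ = R ^ 2 := by ring
  -- local minimum
  have hloc : IsLocalMin Φ θ0 := by
    apply hmin0.isLocalMin
    have hUopen : IsOpen {θ : Fin d → ℝ | θ ⬝ᵥ θ < R ^ 2} := isOpen_lt hselfc continuous_const
    apply Filter.mem_of_superset (hUopen.mem_nhds hθ0int)
    intro θ hθ
    simp only [Set.mem_setOf_eq] at hθ ⊢
    exact le_of_lt hθ
  -- directional derivatives vanish
  have hdir : ∀ v : Fin d → ℝ, (gmap t γ lam cmu μ x θ0 - y) ⬝ᵥ v = 0 := by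
    intro v
    set ψ : ℝ → ℝ := fun s => Φ (θ0 + s • v) with hψdef
    have hline : Continuous fun s : ℝ => θ0 + s • v := by
      exact continuous_const.add (continuous_id.smul continuous_const)
    have hψloc : IsLocalMin ψ 0 := by
      have h0 : (fun s : ℝ => θ0 + s • v) 0 = θ0 := by simp
      have := hloc
      unfold IsLocalMin IsMinFilter at this ⊢
      have htend : Filter.Tendsto (fun s : ℝ => θ0 + s • v) (nhds 0) (nhds θ0) := by
        simpa using hline.tendsto 0
      have := htend.eventually this
      simpa [hψdef, h0] using this
    -- derivative of ψ at 0
    have hexp : ∀ s : ℝ, ψ s =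
        (∑ u ∈ F, γ ^ (t - 1 - u) * M (x u ⬝ᵥ θ0 + s * (x u ⬝ᵥ v)))
        + c * ((θ0 ⬝ᵥ θ0) + 2 * (θ0 ⬝ᵥ v) * s + (v ⬝ᵥ v) * s ^ 2)
        - ((y ⬝ᵥ θ0) + (y ⬝ᵥ v) * s) := by
      intro s
      rw [hψdef]; simp only
      rw [hΦdef]; simp only
      congr 1
      · congr 1
        · apply Finset.sum_congr rfl
          intro u _
          congr 1
          rw [dotProduct_add, dotProduct_smul]
          simp [smul_eq_mul, mul_comm]
        · congr 1
          rw [add_dotProduct, dotProduct_add, dotProduct_add,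
            smul_dotProduct, dotProduct_smul, smul_dotProduct]
          rw [dotProduct_comm v θ0]
          simp [smul_eq_mul]; ring
      · rw [dotProduct_add, dotProduct_smul]
        simp [smul_eq_mul, mul_comm]
    have hψderiv : HasDerivAt ψ
        ((∑ u ∈ F, γ ^ (t - 1 - u) * (μ (x u ⬝ᵥ θ0) * (x u ⬝ᵥ v)))
          + c * (2 * (θ0 ⬝ᵥ v)) - y ⬝ᵥ v) 0 := by
      have h1 : ∀ u ∈ F, HasDerivAt (fun s : ℝ => γ ^ (t - 1 - u) * M (x u ⬝ᵥ θ0 + s * (x u ⬝ᵥ v)))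
          (γ ^ (t - 1 - u) * (μ (x u ⬝ᵥ θ0) * (x u ⬝ᵥ v))) 0 := by
        intro u _
        have hl : HasDerivAt (fun s : ℝ => x u ⬝ᵥ θ0 + s * (x u ⬝ᵥ v)) (x u ⬝ᵥ v) 0 := by
          simpa using (hasDerivAt_id (0:ℝ)).mul_const (x u ⬝ᵥ v) |>.const_add (x u ⬝ᵥ θ0)
        have := (hM (x u ⬝ᵥ θ0 + 0 * (x u ⬝ᵥ v))).comp 0 hl
        simp only [zero_mul, add_zero] at this
        exact this.const_mul _
      have hsum : HasDerivAt (fun s : ℝ => ∑ u ∈ F, γ ^ (t - 1 - u) * M (x u ⬝ᵥ θ0 + s * (x u ⬝ᵥ v)))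
          (∑ u ∈ F, γ ^ (t - 1 - u) * (μ (x u ⬝ᵥ θ0) * (x u ⬝ᵥ v))) 0 :=
        HasDerivAt.fun_sum h1
      have hquad : HasDerivAt (fun s : ℝ => c * ((θ0 ⬝ᵥ θ0) + 2 * (θ0 ⬝ᵥ v) * s + (v ⬝ᵥ v) * s ^ 2))
          (c * (2 * (θ0 ⬝ᵥ v))) 0 := by
        have h2 : HasDerivAt (fun s : ℝ => (θ0 ⬝ᵥ θ0) + 2 * (θ0 ⬝ᵥ v) * s + (v ⬝ᵥ v) * s ^ 2)
            (2 * (θ0 ⬝ᵥ v)) 0 := by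
          have ha : HasDerivAt (fun s : ℝ => 2 * (θ0 ⬝ᵥ v) * s) (2 * (θ0 ⬝ᵥ v)) 0 := by
            simpa using (hasDerivAt_id (0:ℝ)).const_mul (2 * (θ0 ⬝ᵥ v))
          have hb : HasDerivAt (fun s : ℝ => (v ⬝ᵥ v) * s ^ 2) 0 0 := by
            simpa using (hasDerivAt_pow 2 (0:ℝ)).const_mul (v ⬝ᵥ v)
          simpa using (ha.const_add (θ0 ⬝ᵥ θ0)).fun_add hb
        exact h2.const_mul c
      have hlin : HasDerivAt (fun s : ℝ => (y ⬝ᵥ θ0) + (y ⬝ᵥ v) * s) (y ⬝ᵥ v) 0 := by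
        simpa using ((hasDerivAt_id (0:ℝ)).const_mul (y ⬝ᵥ v)).const_add (y ⬝ᵥ θ0)
      have := (hsum.fun_add hquad).fun_sub hlin
      apply HasDerivAt.congr_of_eventuallyEq this
      filter_upwards with s
      rw [hexp s]
    have hzero := hψloc.hasDerivAt_eq_zero hψderiv
    -- rewrite as dot product with gmap
    have hgdot : gmap t γ lam cmu μ x θ0 ⬝ᵥ v
        = (∑ u ∈ F, γ ^ (t - 1 - u) * (μ (x u ⬝ᵥ θ0) * (x u ⬝ᵥ v)))
          + (lam * cmu) * (θ0 ⬝ᵥ v) := by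
      rw [gmap, add_dotProduct, sum_dot, smul_dotProduct, smul_eq_mul]
      congr 1
      apply Finset.sum_congr rfl
      intro u _
      rw [smul_dotProduct, smul_eq_mul, mul_assoc]
    rw [sub_dotProduct, hgdot]
    rw [hcdef] at hzero
    linarith [hzero]
  have hvv := hdir (gmap t γ lam cmu μ x θ0 - y)
  rw [dotProduct_self_eq_zero] at hvv
  exact ⟨θ0, sub_eq_zero.mp hvv⟩


lemma mnorm_neg {d : ℕ} (M : Matrix (Fin d) (Fin d) ℝ) (v : Fin d → ℝ) :
    mnorm M (-v) = mnorm M v := by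
  unfold mnorm
  rw [Matrix.mulVec_neg, neg_dotProduct, dotProduct_neg, neg_neg]

/-- Projection drift bound. -/
theorem stmt_5 {d t : ℕ} (hd : 1 ≤ d) (ht : 2 ≤ t)
    (L S lam γ : ℝ) (hL : 0 < L) (hS : 0 < S) (hlam : 0 < lam)
    (hγ : γ ∈ Set.Ioo (0 : ℝ) 1)
    (x : ℕ → Fin d → ℝ) (hx : ∀ s ∈ Finset.Icc 1 (t - 1), eucNorm (x s) ≤ L)
    (μ : ℝ → ℝ) (hμc : ContDiff ℝ 1 μ) (hμm : StrictMono μ)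
    (kmu cmu : ℝ)
    (hkmu : kmu = sSup (deriv μ '' Set.Icc (-(L * S)) (L * S)))
    (hcmu : cmu = sInf (deriv μ '' Set.Icc (-(L * S)) (L * S)))
    (hcmupos : 0 < cmu)
    (β : ℝ) (hβ : 0 < β)
    (θhat θbar θstar θp : Fin d → ℝ)
    (hbar : mnorm (designVtilde t γ lam x)⁻¹
      (gmap t γ lam cmu μ x θbar - gmap t γ lam cmu μ x θhat) ≤ β)
    (hstar : eucNorm θstar ≤ S)
    (hfeas : ∃ θ' : Fin d → ℝ, eucNorm θ' ≤ S ∧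
      mnorm (designVtilde t γ lam x)⁻¹
        (gmap t γ lam cmu μ x θ' - gmap t γ lam cmu μ x θp) ≤ β)
    (hmin : ∀ θ : Fin d → ℝ,
      (∃ θ' : Fin d → ℝ, eucNorm θ' ≤ S ∧
        mnorm (designVtilde t γ lam x)⁻¹
          (gmap t γ lam cmu μ x θ' - gmap t γ lam cmu μ x θ) ≤ β) →
      mnorm (designV t γ lam x * designV t γ lam x)⁻¹
          (gmap t γ lam cmu μ x θp - gmap t γ lam cmu μ x θhat)
        ≤ mnorm (designV t γ lam x * designV t γ lam x)⁻¹
            (gmap t γ lam cmu μ x θ - gmap t γ lam cmu μ x θhat)) :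
    mnorm (designV t γ lam x * designV t γ lam x)⁻¹
        (gmap t γ lam cmu μ x θp - gmap t γ lam cmu μ x θhat)
      ≤ mnorm (designV t γ lam x * designV t γ lam x)⁻¹
          (gmap t γ lam cmu μ x θbar - gmap t γ lam cmu μ x θstar) := by
  obtain ⟨θc, hθc⟩ := exists_gmap_eq (t := t) hγ.1.le (mul_pos hlam hcmupos)
      hμc.continuous hμm.monotone x
      (gmap t γ lam cmu μ x θhat + (gmap t γ lam cmu μ x θstar - gmap t γ lam cmu μ x θbar))
  have e1 : gmap t γ lam cmu μ x θstar - gmap t γ lam cmu μ x θc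
      = gmap t γ lam cmu μ x θbar - gmap t γ lam cmu μ x θhat := by
    rw [hθc]; abel
  have e2 : gmap t γ lam cmu μ x θc - gmap t γ lam cmu μ x θhat
      = gmap t γ lam cmu μ x θstar - gmap t γ lam cmu μ x θbar := by
    rw [hθc]; abel
  have h := hmin θc ⟨θstar, hstar, by rw [e1]; exact hbar⟩
  rw [e2] at h
  have e3 : gmap t γ lam cmu μ x θbar - gmap t γ lam cmu μ x θstar
      = -(gmap t γ lam cmu μ x θstar - gmap t γ lam cmu μ x θbar) := (neg_sub _ _).symm
  rw [e3, mnorm_neg]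
  exact h
end
end

section
/- Bijectivity of the quasi-likelihood map: let μ : ℝ → ℝ be continuous and strictly increasing, let γ ∈ (0,1), λ > 0, c_μ > 0, and let x_1, …, x_{t-1} ∈ ℝ^d. Then the function g_t : ℝ^d → ℝ^d defined by g_t(θ) = Σ_{s=1}^{t-1} γ^{t-1-s} μ(⟨x_s, θ⟩) x_s + λ c_μ θ is a bijection of ℝ^d onto ℝ^d. -/
open Finset Matrix

noncomputable section

/-- Euclidean norm of a vector in `ℝ^d`. -/
def enorm {d : ℕ} (v : Fin d → ℝ) : ℝ := Real.sqrt (v ⬝ᵥ v)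

def gmapE {d : ℕ} (t : ℕ) (γ lam cmu : ℝ) (μ : ℝ → ℝ) (x : ℕ → Fin d → ℝ) :
    EuclideanSpace ℝ (Fin d) → EuclideanSpace ℝ (Fin d) :=
  fun θ => WithLp.toLp 2 (gmap t γ lam cmu μ x (WithLp.ofLp θ))

set_option maxHeartbeats 2000000 in
open scoped RealInnerProductSpace in
theorem gmap_bij_aux {d : ℕ} (t : ℕ) (γ lam cmu : ℝ) (hγ0 : 0 < γ)
    (hk : 0 < lam * cmu) (μ : ℝ → ℝ) (hμc : Continuous μ) (hμm : Monotone μ)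
    (x : ℕ → Fin d → ℝ) :
    Function.Bijective (gmapE t γ lam cmu μ x) := by
  set k : ℝ := lam * cmu with hkdef
  set F : Finset ℕ := Finset.Icc 1 (t - 1) with hF
  set x' : ℕ → EuclideanSpace ℝ (Fin d) := fun s => WithLp.toLp 2 (x s) with hx'
  set c : ℕ → ℝ := fun s => γ ^ (t - 1 - s) with hc
  have hcpos : ∀ s, 0 < c s := fun s => pow_pos hγ0 _
  have hdot : ∀ v w : EuclideanSpace ℝ (Fin d),
      (v : Fin d → ℝ) ⬝ᵥ (w : Fin d → ℝ) = ⟪v, w⟫ := by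
    intro v w
    simp [dotProduct, PiLp.inner_apply, RCLike.inner_apply, conj_trivial, mul_comm]
  set G : EuclideanSpace ℝ (Fin d) → EuclideanSpace ℝ (Fin d) :=
    gmapE t γ lam cmu μ x with hGdef
  have hGform : ∀ θ : EuclideanSpace ℝ (Fin d),
      G θ = (∑ s ∈ F, (c s * μ (x s ⬝ᵥ (θ : Fin d → ℝ))) • x' s) + k • θ := fun θ => by
      simp [G, gmapE, gmap, x', c, k, F]
  -- strong monotonicity
  have key : ∀ a b : EuclideanSpace ℝ (Fin d), k * ‖a - b‖ ^ 2 ≤ ⟪G a - G b, a - b⟫ := by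
    intro a b
    rw [hGform a, hGform b]
    have hsub : ∀ s, ⟪x' s, a - b⟫ = x s ⬝ᵥ (a : Fin d → ℝ) - x s ⬝ᵥ (b : Fin d → ℝ) := by
      intro s; rw [inner_sub_right, ← hdot, ← hdot]
    have hexp : ⟪((∑ s ∈ F, (c s * μ (x s ⬝ᵥ (a : Fin d → ℝ))) • x' s) + k • a)
          - ((∑ s ∈ F, (c s * μ (x s ⬝ᵥ (b : Fin d → ℝ))) • x' s) + k • b), a - b⟫
        = (∑ s ∈ F, c s * ((μ (x s ⬝ᵥ (a : Fin d → ℝ)) - μ (x s ⬝ᵥ (b : Fin d → ℝ)))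
            * (x s ⬝ᵥ (a : Fin d → ℝ) - x s ⬝ᵥ (b : Fin d → ℝ)))) + k * ‖a - b‖ ^ 2 := by
      rw [show ((∑ s ∈ F, (c s * μ (x s ⬝ᵥ (a : Fin d → ℝ))) • x' s) + k • a)
          - ((∑ s ∈ F, (c s * μ (x s ⬝ᵥ (b : Fin d → ℝ))) • x' s) + k • b)
          = (∑ s ∈ F, ((c s * μ (x s ⬝ᵥ (a : Fin d → ℝ))) • x' s
              - (c s * μ (x s ⬝ᵥ (b : Fin d → ℝ))) • x' s)) + k • (a - b) by
        rw [Finset.sum_sub_distrib]; module]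
      rw [inner_add_left, sum_inner, real_inner_smul_left, real_inner_self_eq_norm_sq]
      congr 1
      apply Finset.sum_congr rfl
      intro s _
      rw [inner_sub_left, real_inner_smul_left, real_inner_smul_left, hsub s]
      ring
    rw [hexp]
    have hnn : 0 ≤ ∑ s ∈ F, c s * ((μ (x s ⬝ᵥ (a : Fin d → ℝ)) - μ (x s ⬝ᵥ (b : Fin d → ℝ)))
        * (x s ⬝ᵥ (a : Fin d → ℝ) - x s ⬝ᵥ (b : Fin d → ℝ))) := by
      apply Finset.sum_nonneg
      intro s _
      apply mul_nonneg (hcpos s).le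
      rcases le_total (x s ⬝ᵥ (a : Fin d → ℝ)) (x s ⬝ᵥ (b : Fin d → ℝ)) with h | h
      · have := hμm h; nlinarith
      · have := hμm h; nlinarith
    linarith
  constructor
  · -- injectivity
    intro a b hab
    have h := key a b
    rw [show G a = G b from hab, sub_self, inner_zero_left] at h
    have h2 : ‖a - b‖ ^ 2 = 0 := by nlinarith [sq_nonneg ‖a - b‖]
    have h3 : a - b = 0 := by
      have := pow_eq_zero_iff (n := 2) (by norm_num) |>.mp h2
      exact norm_eq_zero.mp this
    exact sub_eq_zero.mp h3
  · -- surjectivity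
    intro y
    -- antiderivative of μ
    set Mf : ℝ → ℝ := fun u => ∫ v in (0:ℝ)..u, μ v with hMf
    have hMd : ∀ a : ℝ, HasDerivAt Mf (μ a) a := fun a =>
      (hμc.integral_hasStrictDerivAt 0 a).hasDerivAt
    have hMlb : ∀ u : ℝ, μ 0 * u ≤ Mf u := by
      intro u
      rcases le_total 0 u with h | h
      · have : ∫ v in (0:ℝ)..u, μ 0 ≤ ∫ v in (0:ℝ)..u, μ v :=
          intervalIntegral.integral_mono_on h (intervalIntegrable_const)
            (hμc.intervalIntegrable 0 u) (fun v hv => hμm hv.1)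
        simpa [mul_comm] using this
      · have : ∫ v in u..(0:ℝ), μ v ≤ ∫ v in u..(0:ℝ), μ 0 :=
          intervalIntegral.integral_mono_on h (hμc.intervalIntegrable u 0)
            (intervalIntegrable_const) (fun v hv => hμm hv.2)
        rw [intervalIntegral.integral_const] at this
        have h0 : Mf u = -∫ v in u..(0:ℝ), μ v := by
          rw [hMf]; exact (intervalIntegral.integral_symm u 0)
        rw [h0]; simp only [smul_eq_mul, sub_zero] at this ⊢; nlinarith
    -- the potential function
    set f : EuclideanSpace ℝ (Fin d) → ℝ := fun θ =>
      (∑ s ∈ F, c s * Mf (x s ⬝ᵥ (θ : Fin d → ℝ))) + (k / 2) * ‖θ‖ ^ 2 - ⟪y, θ⟫ with hfdef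
    have hlin : ∀ (s : ℕ) (θ : EuclideanSpace ℝ (Fin d)),
        HasFDerivAt (fun θ : EuclideanSpace ℝ (Fin d) => x s ⬝ᵥ (θ : Fin d → ℝ))
          (innerSL ℝ (x' s)) θ := by
      intro s θ
      have heq : (fun θ : EuclideanSpace ℝ (Fin d) => x s ⬝ᵥ (θ : Fin d → ℝ))
          = ⇑(innerSL ℝ (x' s)) := by
        funext w; rw [hdot (x' s) w]; simp [innerSL_apply_apply]
      rw [heq]
      exact (innerSL ℝ (x' s)).hasFDerivAt
    have hfD : ∀ θ : EuclideanSpace ℝ (Fin d),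
        HasFDerivAt f (innerSL ℝ (G θ - y)) θ := by
      intro θ
      have h1 : HasFDerivAt (fun θ : EuclideanSpace ℝ (Fin d) =>
          ∑ s ∈ F, c s * Mf (x s ⬝ᵥ (θ : Fin d → ℝ)))
          (∑ s ∈ F, c s • ((μ (x s ⬝ᵥ (θ : Fin d → ℝ))) • innerSL ℝ (x' s))) θ := by
        apply HasFDerivAt.fun_sum
        intro s _
        exact ((hMd _).comp_hasFDerivAt θ (hlin s θ)).const_mul (c s)
      have h2 : HasFDerivAt (fun θ : EuclideanSpace ℝ (Fin d) => (k / 2) * ‖θ‖ ^ 2)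
          ((k / 2) • (2 • innerSL ℝ θ)) θ :=
        ((hasStrictFDerivAt_norm_sq θ).hasFDerivAt).const_mul (k / 2)
      have h3 : HasFDerivAt (fun θ : EuclideanSpace ℝ (Fin d) => (⟪y, θ⟫ : ℝ))
          (innerSL ℝ y) θ := by
        have heq : (fun θ : EuclideanSpace ℝ (Fin d) => (⟪y, θ⟫ : ℝ)) = ⇑(innerSL ℝ y) := by
          funext w; simp [innerSL_apply_apply]
        rw [heq]; exact (innerSL ℝ y).hasFDerivAt
      have htot := (h1.add h2).sub h3
      have heq : (∑ s ∈ F, c s • ((μ (x s ⬝ᵥ (θ : Fin d → ℝ))) • innerSL ℝ (x' s)))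
          + (k / 2) • (2 • innerSL ℝ θ) - innerSL ℝ y = innerSL ℝ (G θ - y) := by
        ext v
        simp only [ContinuousLinearMap.add_apply, ContinuousLinearMap.sub_apply,
          ContinuousLinearMap.coe_sum', Finset.sum_apply, ContinuousLinearMap.coe_smul',
          Pi.smul_apply, innerSL_apply_apply, smul_eq_mul, nsmul_eq_mul]
        rw [hGform θ, inner_sub_left, inner_add_left, sum_inner, real_inner_smul_left]
        simp only [real_inner_smul_left]
        simp only [Pi.mul_apply, innerSL_apply_apply, Pi.ofNat_apply, Pi.natCast_apply, Nat.cast_ofNat]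
        ring
      rw [← heq]
      exact htot
    -- coercivity
    set C : ℝ := (∑ s ∈ F, c s * |μ 0| * ‖x' s‖) + ‖y‖ with hC
    have hCnn : 0 ≤ C := by
      rw [hC]
      have h1 : ∀ s ∈ F, (0:ℝ) ≤ c s * |μ 0| * ‖x' s‖ := fun s _ =>
        mul_nonneg (mul_nonneg (hcpos s).le (abs_nonneg _)) (norm_nonneg _)
      exact add_nonneg (Finset.sum_nonneg h1) (norm_nonneg _)
    have hflb : ∀ θ : EuclideanSpace ℝ (Fin d), (k / 2) * ‖θ‖ ^ 2 - C * ‖θ‖ ≤ f θ := by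
      intro θ
      have hterm : ∀ s ∈ F,
          -(c s * |μ 0| * ‖x' s‖ * ‖θ‖) ≤ c s * Mf (x s ⬝ᵥ (θ : Fin d → ℝ)) := by
        intro s _
        have h1 : μ 0 * (x s ⬝ᵥ (θ : Fin d → ℝ)) ≤ Mf (x s ⬝ᵥ (θ : Fin d → ℝ)) := hMlb _
        have h2 : |x s ⬝ᵥ (θ : Fin d → ℝ)| ≤ ‖x' s‖ * ‖θ‖ := by
          rw [hdot (x' s) θ]; exact abs_real_inner_le_norm _ _
        have h3 : -( |μ 0| * (‖x' s‖ * ‖θ‖)) ≤ μ 0 * (x s ⬝ᵥ (θ : Fin d → ℝ)) := by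
          have hn := neg_abs_le (μ 0 * (x s ⬝ᵥ (θ : Fin d → ℝ)))
          have habs : |μ 0 * (x s ⬝ᵥ (θ : Fin d → ℝ))| ≤ |μ 0| * (‖x' s‖ * ‖θ‖) := by
            rw [abs_mul]
            exact mul_le_mul_of_nonneg_left h2 (abs_nonneg _)
          linarith
        have h4 := (hcpos s).le
        nlinarith
      have heq0 : -(∑ s ∈ F, c s * |μ 0| * ‖x' s‖) * ‖θ‖
          = ∑ s ∈ F, -(c s * |μ 0| * ‖x' s‖ * ‖θ‖) := by
        rw [Finset.sum_neg_distrib, ← Finset.sum_mul, neg_mul]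
      have hsum : -(∑ s ∈ F, c s * |μ 0| * ‖x' s‖) * ‖θ‖
          ≤ ∑ s ∈ F, c s * Mf (x s ⬝ᵥ (θ : Fin d → ℝ)) := by
        rw [heq0]; exact Finset.sum_le_sum hterm
      have hy : -(‖y‖ * ‖θ‖) ≤ -⟪y, θ⟫ := by
        have := real_inner_le_norm y θ
        linarith
      rw [hfdef]
      simp only [hC]
      nlinarith [hsum, hy]
    -- choose radius
    set R : ℝ := max 1 ((2 / k) * (C + |f 0| + 1)) with hR
    have hR1 : (1:ℝ) ≤ R := le_max_left _ _
    have hR0 : (0:ℝ) < R := lt_of_lt_of_le one_pos hR1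
    have hRbig : (2 / k) * (C + |f 0| + 1) ≤ R := le_max_right _ _
    have hbdry : ∀ θ : EuclideanSpace ℝ (Fin d), ‖θ‖ = R → f 0 < f θ := by
      intro θ hθ
      have h1 := hflb θ
      rw [hθ] at h1
      have h2 : C + |f 0| + 1 ≤ (k / 2) * R := by
        have h2a : (2 / k) * (C + |f 0| + 1) ≤ R := hRbig
        have h2b : k * ((2 / k) * (C + |f 0| + 1)) ≤ k * R :=
          mul_le_mul_of_nonneg_left h2a hk.le
        rw [← mul_assoc, mul_div_cancel₀ 2 (ne_of_gt hk)] at h2b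
        linarith
      have h3 : (|f 0| + 1) * R ≤ (k / 2) * R ^ 2 - C * R := by nlinarith
      have h4 : |f 0| + 1 ≤ (|f 0| + 1) * R := by nlinarith [abs_nonneg (f 0)]
      have h5 := neg_abs_le (f 0)
      have h6 := le_abs_self (f 0)
      clear_value f R C k
      linarith
    -- existence of a minimizer on the closed ball
    have hcont : ContinuousOn f (Metric.closedBall (0 : EuclideanSpace ℝ (Fin d)) R) :=
      fun θ _ => ((hfD θ).differentiableAt.continuousAt).continuousWithinAt
    obtain ⟨θ₀, hθ₀mem, hθ₀min⟩ :=
      (isCompact_closedBall (0 : EuclideanSpace ℝ (Fin d)) R).exists_isMinOn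
        ⟨0, Metric.mem_closedBall_self hR0.le⟩ hcont
    have hθ₀le : f θ₀ ≤ f 0 := hθ₀min (Metric.mem_closedBall_self hR0.le)
    have hθ₀lt : ‖θ₀‖ < R := by
      rcases lt_or_eq_of_le (by simpa [Metric.mem_closedBall, dist_zero_right] using hθ₀mem :
        ‖θ₀‖ ≤ R) with h | h
      · exact h
      · exact absurd (hbdry θ₀ h) (by linarith)
    have hloc : IsLocalMin f θ₀ := by
      apply hθ₀min.isLocalMin
      apply mem_nhds_iff.mpr
      exact ⟨Metric.ball 0 R, Metric.ball_subset_closedBall, Metric.isOpen_ball,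
        by simpa [Metric.mem_ball, dist_zero_right] using hθ₀lt⟩
    have hD0 : innerSL ℝ (G θ₀ - y) = 0 := hloc.hasFDerivAt_eq_zero (hfD θ₀)
    have : (⟪G θ₀ - y, G θ₀ - y⟫ : ℝ) = 0 := by
      have h := congrFun (congrArg DFunLike.coe hD0) (G θ₀ - y)
      rwa [innerSL_apply_apply, ContinuousLinearMap.zero_apply] at h
    have hGy : G θ₀ - y = 0 := inner_self_eq_zero.mp this
    exact ⟨θ₀, sub_eq_zero.mp hGy⟩

/-- Bijectivity of the quasi-likelihood map. -/
theorem stmt_11 {d t : ℕ} (hd : 1 ≤ d) (ht : 2 ≤ t)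
    (γ lam cmu : ℝ) (hγ : γ ∈ Set.Ioo (0 : ℝ) 1) (hlam : 0 < lam) (hcmu : 0 < cmu)
    (μ : ℝ → ℝ) (hμc : Continuous μ) (hμm : StrictMono μ)
    (x : ℕ → Fin d → ℝ) :
    Function.Bijective (gmap t γ lam cmu μ x) := by
  have h := gmap_bij_aux t γ lam cmu hγ.1 (mul_pos hlam hcmu) μ hμc hμm.monotone x
  have h2 := (WithLp.linearEquiv 2 ℝ (Fin d → ℝ)).bijective.comp
    (h.comp (WithLp.linearEquiv 2 ℝ (Fin d → ℝ)).symm.bijective)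
  exact h2
end
end

section
/- Bound on the contribution of old observations to the tracking error: let θ*_1, …, θ*_t ∈ Θ, let α_1, …, α_{t-1} be reals with |α_s| ≤ k_μ for all s, and let D be an integer with 1 ≤ D ≤ t−1. Then ‖ Σ_{s=1}^{t−D−1} γ^{t-1-s} α_s x_s x_sᵀ (θ*_s − θ*_t) ‖_{V_t^{-2}} ≤ 2 k_μ S L² γ^D / (λ (1 − γ)). -/
open Finset Matrix

noncomputable section

/-- Euclidean norm of a vector in `ℝ^d`. -/
def enormVec {d : ℕ} (v : Fin d → ℝ) : ℝ := Real.sqrt (v ⬝ᵥ v)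

namespace Stmt15

lemma dot_self_nonneg {d : ℕ} (v : Fin d → ℝ) : 0 ≤ v ⬝ᵥ v :=
  Finset.sum_nonneg fun i _ => mul_self_nonneg _

lemma vmv {d : ℕ} (a b u : Fin d → ℝ) : (vecMulVec a b) *ᵥ u = (b ⬝ᵥ u) • a := by
  ext i
  simp only [Matrix.mulVec, Matrix.vecMulVec_apply, dotProduct, Pi.smul_apply, smul_eq_mul,
    Finset.mul_sum]
  rw [Finset.sum_mul]
  exact Finset.sum_congr rfl fun j _ => by ring

lemma en_nonneg {d : ℕ} (v : Fin d → ℝ) : 0 ≤ enormVec v := Real.sqrt_nonneg _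

lemma en_smul {d : ℕ} (c : ℝ) (v : Fin d → ℝ) : enormVec (c • v) = |c| * enormVec v := by
  unfold enormVec
  rw [smul_dotProduct, dotProduct_smul, smul_eq_mul, smul_eq_mul, ← mul_assoc,
    Real.sqrt_mul (mul_self_nonneg c), Real.sqrt_mul_self_eq_abs]

lemma sq_en {d : ℕ} (v : Fin d → ℝ) : v ⬝ᵥ v = enormVec v ^ 2 :=
  (Real.sq_sqrt (dot_self_nonneg v)).symm

lemma abs_dot_le {d : ℕ} (a b : Fin d → ℝ) : |a ⬝ᵥ b| ≤ enormVec a * enormVec b := by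
  have h := Finset.sum_mul_sq_le_sq_mul_sq Finset.univ a b
  have h2 : |a ⬝ᵥ b| = Real.sqrt ((a ⬝ᵥ b) ^ 2) := (Real.sqrt_sq_eq_abs _).symm
  rw [h2]
  have h3 : (a ⬝ᵥ b) ^ 2 ≤ (a ⬝ᵥ a) * (b ⬝ᵥ b) := by
    simpa [dotProduct, sq] using h
  calc Real.sqrt ((a ⬝ᵥ b) ^ 2) ≤ Real.sqrt ((a ⬝ᵥ a) * (b ⬝ᵥ b)) := Real.sqrt_le_sqrt h3
    _ = enormVec a * enormVec b := Real.sqrt_mul (dot_self_nonneg a) _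

lemma dot_le {d : ℕ} (a b : Fin d → ℝ) : a ⬝ᵥ b ≤ enormVec a * enormVec b :=
  (le_abs_self _).trans (abs_dot_le a b)

lemma en_eq_norm {d : ℕ} (v : Fin d → ℝ) :
    enormVec v = ‖(WithLp.equiv 2 (Fin d → ℝ)).symm v‖ := by
  rw [EuclideanSpace.norm_eq]
  unfold enormVec dotProduct
  congr 1
  exact Finset.sum_congr rfl fun i _ => by
    simp [Real.norm_eq_abs, sq_abs, sq]

lemma en_sum_le {d : ℕ} {ι : Type*} (s : Finset ι) (f : ι → Fin d → ℝ) :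
    enormVec (∑ i ∈ s, f i) ≤ ∑ i ∈ s, enormVec (f i) := by
  simp only [en_eq_norm]
  rw [show (WithLp.equiv 2 (Fin d → ℝ)).symm (∑ i ∈ s, f i)
      = ∑ i ∈ s, (WithLp.equiv 2 (Fin d → ℝ)).symm (f i) from WithLp.toLp_sum 2 (Fin d → ℝ) s f]
  exact norm_sum_le s (fun i => (WithLp.equiv 2 (Fin d → ℝ)).symm (f i))

lemma en_sub_le {d : ℕ} (a b : Fin d → ℝ) : enormVec (a - b) ≤ enormVec a + enormVec b := by
  simp only [en_eq_norm]
  exact norm_sub_le _ _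

lemma sum_mulVec {d : ℕ} {ι : Type*} (s : Finset ι) (M : ι → Matrix (Fin d) (Fin d) ℝ)
    (v : Fin d → ℝ) : (∑ i ∈ s, M i) *ᵥ v = ∑ i ∈ s, M i *ᵥ v := by
  classical
  induction s using Finset.induction_on with
  | empty => simp
  | insert _ _ h ih => rw [Finset.sum_insert h, Finset.sum_insert h, Matrix.add_mulVec, ih]

lemma dot_sum {d : ℕ} {ι : Type*} (s : Finset ι) (w : Fin d → ℝ) (f : ι → Fin d → ℝ) :
    w ⬝ᵥ (∑ i ∈ s, f i) = ∑ i ∈ s, w ⬝ᵥ f i := by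
  classical
  induction s using Finset.induction_on with
  | empty => simp
  | insert _ _ h ih => rw [Finset.sum_insert h, Finset.sum_insert h, dotProduct_add, ih]

lemma designV_herm {d : ℕ} (t : ℕ) (γ lam : ℝ) (x : ℕ → Fin d → ℝ) :
    (designV t γ lam x).IsHermitian := by
  unfold designV Matrix.IsHermitian
  rw [Matrix.conjTranspose_eq_transpose_of_trivial]
  ext i j
  simp only [Matrix.transpose_apply, Matrix.add_apply, Matrix.sum_apply, Matrix.smul_apply,
    Matrix.vecMulVec_apply, smul_eq_mul]
  congr 1
  · exact Finset.sum_congr rfl fun s _ => by ring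
  · by_cases h : i = j <;> simp [Matrix.one_apply, h, eq_comm]

lemma designV_quad {d : ℕ} (t : ℕ) (γ lam : ℝ) (x : ℕ → Fin d → ℝ) (w : Fin d → ℝ) :
    w ⬝ᵥ (designV t γ lam x) *ᵥ w
      = (∑ s ∈ Finset.Icc 1 (t - 1), γ ^ (t - 1 - s) * (x s ⬝ᵥ w) ^ 2) + lam * (w ⬝ᵥ w) := by
  unfold designV
  rw [Matrix.add_mulVec, dotProduct_add, sum_mulVec, dot_sum]
  congr 1
  · refine Finset.sum_congr rfl fun s _ => ?_
    rw [Matrix.smul_mulVec, vmv, dotProduct_smul, dotProduct_smul, dotProduct_comm,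
      smul_eq_mul, smul_eq_mul]
    ring
  · rw [Matrix.smul_mulVec, Matrix.one_mulVec, dotProduct_smul, smul_eq_mul]

lemma designV_posDef {d : ℕ} (t : ℕ) {γ lam : ℝ} (hγ0 : 0 < γ) (hlam : 0 < lam)
    (x : ℕ → Fin d → ℝ) : (designV t γ lam x).PosDef := by
  refine Matrix.PosDef.of_dotProduct_mulVec_pos (designV_herm t γ lam x) fun z hz => ?_
  have hz' : 0 < z ⬝ᵥ z :=
    lt_of_le_of_ne (dot_self_nonneg z) fun h0 => hz (dotProduct_self_eq_zero.mp h0.symm)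
  have hstar : star z = z := by
    funext i; exact star_trivial _
  rw [hstar, designV_quad]
  have hsum : 0 ≤ ∑ s ∈ Finset.Icc 1 (t - 1), γ ^ (t - 1 - s) * (x s ⬝ᵥ z) ^ 2 :=
    Finset.sum_nonneg fun s _ => mul_nonneg (pow_nonneg hγ0.le _) (sq_nonneg _)
  nlinarith

end Stmt15

/-- Bound on the contribution of old observations to the tracking error. -/
theorem stmt_15 {d t : ℕ} (hd : 1 ≤ d) (ht : 2 ≤ t)
    (L S lam kmu γ : ℝ) (hL : 0 < L) (hS : 0 < S) (hlam : 0 < lam)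
    (hkmu : 0 < kmu) (hγ : γ ∈ Set.Ioo (0 : ℝ) 1)
    (x : ℕ → Fin d → ℝ) (hx : ∀ s ∈ Finset.Icc 1 (t - 1), enormVec (x s) ≤ L)
    (θstar : ℕ → Fin d → ℝ) (hθstar : ∀ s ∈ Finset.Icc 1 t, enormVec (θstar s) ≤ S)
    (α : ℕ → ℝ) (hα : ∀ s ∈ Finset.Icc 1 (t - 1), |α s| ≤ kmu)
    (D : ℕ) (hD1 : 1 ≤ D) (hD2 : D ≤ t - 1) :
    mnorm (designV t γ lam x * designV t γ lam x)⁻¹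
        (∑ s ∈ Finset.Icc 1 (t - D - 1),
          (γ ^ (t - 1 - s) * α s) • (vecMulVec (x s) (x s)).mulVec (θstar s - θstar t))
      ≤ 2 * kmu * S * L ^ 2 * γ ^ D / (lam * (1 - γ)) := by
  classical
  obtain ⟨hγ0, hγ1⟩ := hγ
  set V := designV t γ lam x with hVdef
  set v := ∑ s ∈ Finset.Icc 1 (t - D - 1),
      (γ ^ (t - 1 - s) * α s) • (vecMulVec (x s) (x s)).mulVec (θstar s - θstar t) with hvdef
  have hherm : V.IsHermitian := Stmt15.designV_herm t γ lam x
  have hpd : V.PosDef := Stmt15.designV_posDef t hγ0 hlam x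
  have hdet : IsUnit V.det := (Matrix.isUnit_iff_isUnit_det V).mp hpd.isUnit
  set w := V⁻¹ *ᵥ v with hwdef
  have hsymm : (V⁻¹)ᵀ = V⁻¹ := by
    have h1 : (V⁻¹).IsHermitian := hherm.inv
    rw [Matrix.IsHermitian, Matrix.conjTranspose_eq_transpose_of_trivial] at h1
    exact h1
  have hmn : mnorm (V * V)⁻¹ v = enormVec w := by
    unfold mnorm enormVec
    congr 1
    rw [Matrix.mul_inv_rev, ← Matrix.mulVec_mulVec, Matrix.dotProduct_mulVec]
    congr 1
    rw [← hsymm, Matrix.vecMul_transpose]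
  have hVw : V *ᵥ w = v := by
    rw [hwdef, Matrix.mulVec_mulVec, Matrix.mul_nonsing_inv _ hdet, Matrix.one_mulVec]
  have hkey : lam * (w ⬝ᵥ w) ≤ w ⬝ᵥ v := by
    have hq := Stmt15.designV_quad t γ lam x w
    have hsum : 0 ≤ ∑ s ∈ Finset.Icc 1 (t - 1), γ ^ (t - 1 - s) * (x s ⬝ᵥ w) ^ 2 :=
      Finset.sum_nonneg fun s _ => mul_nonneg (pow_nonneg hγ0.le _) (sq_nonneg _)
    calc lam * (w ⬝ᵥ w) ≤ w ⬝ᵥ V *ᵥ w := by rw [hq]; linarith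
      _ = w ⬝ᵥ v := by rw [hVw]
  have h1 : lam * enormVec w ^ 2 ≤ enormVec w * enormVec v := by
    rw [← Stmt15.sq_en]
    exact hkey.trans (Stmt15.dot_le w v)
  have hwle : enormVec w ≤ enormVec v / lam := by
    rcases eq_or_lt_of_le (Stmt15.en_nonneg w) with h | h
    · rw [← h]
      exact div_nonneg (Stmt15.en_nonneg v) hlam.le
    · rw [le_div_iff₀ hlam]
      nlinarith
  -- bound on enormVec v
  have hsub : Finset.Icc 1 (t - D - 1) ⊆ Finset.Icc 1 (t - 1) :=
    Finset.Icc_subset_Icc le_rfl (by omega)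
  have hterm : ∀ s ∈ Finset.Icc 1 (t - D - 1),
      enormVec ((γ ^ (t - 1 - s) * α s) • (vecMulVec (x s) (x s)).mulVec (θstar s - θstar t))
        ≤ 2 * kmu * S * L ^ 2 * γ ^ (t - 1 - s) := by
    intro s hs
    have hs' := hsub hs
    have hsmem := Finset.mem_Icc.mp hs'
    rw [Stmt15.vmv, smul_smul, Stmt15.en_smul]
    have hx' := hx s hs'
    have hθ : enormVec (θstar s - θstar t) ≤ 2 * S := by
      refine (Stmt15.en_sub_le _ _).trans ?_
      have h1 := hθstar s (Finset.mem_Icc.mpr ⟨hsmem.1, by omega⟩)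
      have h2 := hθstar t (Finset.mem_Icc.mpr ⟨by omega, le_rfl⟩)
      linarith
    have hdot : |x s ⬝ᵥ (θstar s - θstar t)| ≤ L * (2 * S) :=
      (Stmt15.abs_dot_le _ _).trans
        (mul_le_mul hx' hθ (Stmt15.en_nonneg _) hL.le)
    have hα' := hα s hs'
    calc |γ ^ (t - 1 - s) * α s * (x s ⬝ᵥ (θstar s - θstar t))| * enormVec (x s)
        ≤ γ ^ (t - 1 - s) * kmu * (L * (2 * S)) * L := by
          refine mul_le_mul ?_ hx' (Stmt15.en_nonneg _) (by positivity)
          rw [abs_mul, abs_mul, abs_pow, abs_of_pos hγ0]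
          exact mul_le_mul
            (mul_le_mul le_rfl hα' (abs_nonneg _) (by positivity))
            hdot (abs_nonneg _) (by positivity)
      _ = 2 * kmu * S * L ^ 2 * γ ^ (t - 1 - s) := by ring
  have hgeom : ∑ s ∈ Finset.Icc 1 (t - D - 1), γ ^ (t - 1 - s) ≤ γ ^ D / (1 - γ) := by
    have hre : ∑ s ∈ Finset.Icc 1 (t - D - 1), γ ^ (t - 1 - s)
        = γ ^ D * ∑ j ∈ Finset.range (t - D - 1), γ ^ j := by
      rw [Finset.mul_sum]
      refine Finset.sum_nbij' (fun s => t - D - 1 - s) (fun j => t - D - 1 - j)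
        ?_ ?_ ?_ ?_ ?_
      · intro a ha
        simp only [Finset.mem_Icc] at ha
        simp only [Finset.mem_range]
        omega
      · intro a ha
        simp only [Finset.mem_range] at ha
        simp only [Finset.mem_Icc]
        omega
      · intro a ha
        simp only [Finset.mem_Icc] at ha
        beta_reduce
        omega
      · intro a ha
        simp only [Finset.mem_range] at ha
        beta_reduce
        omega
      · intro a ha
        simp only [Finset.mem_Icc] at ha
        beta_reduce
        rw [← pow_add]
        congr 1
        omega
    rw [hre]
    have hle : ∑ j ∈ Finset.range (t - D - 1), γ ^ j ≤ (1 - γ)⁻¹ := by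
      have hs := (summable_geometric_of_lt_one hγ0.le hγ1).sum_le_tsum (Finset.range (t - D - 1))
        (fun i _ => pow_nonneg hγ0.le i)
      rwa [tsum_geometric_of_lt_one hγ0.le hγ1] at hs
    calc γ ^ D * ∑ j ∈ Finset.range (t - D - 1), γ ^ j
        ≤ γ ^ D * (1 - γ)⁻¹ := by
          exact mul_le_mul_of_nonneg_left hle (pow_nonneg hγ0.le _)
      _ = γ ^ D / (1 - γ) := by rw [div_eq_mul_inv]
  have hv_le : enormVec v ≤ 2 * kmu * S * L ^ 2 * (γ ^ D / (1 - γ)) := by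
    calc enormVec v ≤ ∑ s ∈ Finset.Icc 1 (t - D - 1),
          enormVec ((γ ^ (t - 1 - s) * α s) • (vecMulVec (x s) (x s)).mulVec (θstar s - θstar t)) :=
            Stmt15.en_sum_le _ _
      _ ≤ ∑ s ∈ Finset.Icc 1 (t - D - 1), 2 * kmu * S * L ^ 2 * γ ^ (t - 1 - s) :=
            Finset.sum_le_sum hterm
      _ = 2 * kmu * S * L ^ 2 * ∑ s ∈ Finset.Icc 1 (t - D - 1), γ ^ (t - 1 - s) := by
            rw [Finset.mul_sum]
      _ ≤ 2 * kmu * S * L ^ 2 * (γ ^ D / (1 - γ)) := by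
            exact mul_le_mul_of_nonneg_left hgeom (by positivity)
  rw [hmn]
  refine hwle.trans ?_
  have h1γ : 0 < 1 - γ := by linarith
  calc enormVec v / lam ≤ (2 * kmu * S * L ^ 2 * (γ ^ D / (1 - γ))) / lam := by
        gcongr
    _ = 2 * kmu * S * L ^ 2 * γ ^ D / (lam * (1 - γ)) := by
        field_simp
end
end
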